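/- arXiv:1811.01816 — 7 statements merged into one kernel-verified Lean document; each statement's English description precedes it below -/
import Mathlib

section
/- Let (X,w) be a pure d-dimensional simplicial complex on {1,…,n} with a balanced weight function, and suppose (X,w) is a 0-local spectral expander. Fix 1 ≤ k < d, let D_k be the diagonal matrix indexed by X(k) with entries w(τ), and let Q_k = D_k^{1/2}·P_k^∧·D_k^{−1/2}, which is a symmetric matrix. Then for every 0 ≤ i ≤ k, Q_k has at most |X(i)| eigenvalues, counted with multiplicity, strictly greater than 1 − (i+1)/(k+1). In particular (taking i = 0, with |X(0)| = 1), the second largest eigenvalue of Q_k is at most k/(k+1). -/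
open Matrix Finset
open scoped Classical

noncomputable section

variable (n : ℕ)

/-- `X` is a pure `d`-dimensional simplicial complex on `{1,…,n}`:
nonempty, downward closed, and every face is contained in a face of cardinality `d`. -/
def IsPureComplex (X : Finset (Finset (Fin n))) (d : ℕ) : Prop :=
  X.Nonempty ∧ (∀ σ ∈ X, ∀ τ ⊆ σ, τ ∈ X) ∧
    (∀ σ ∈ X, ∃ ρ ∈ X, ρ.card = d ∧ σ ⊆ ρ)

/-- `w` is a balanced weight function on the pure `d`-dimensional complex `X`. -/
def IsBalanced (X : Finset (Finset (Fin n))) (d : ℕ) (w : Finset (Fin n) → ℝ) : Prop :=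
  (∀ τ ∈ X, 0 < w τ) ∧
    (∀ τ ∈ X, τ.card < d →
      w τ = ∑ σ ∈ X.filter (fun σ => τ ⊆ σ ∧ σ.card = τ.card + 1), w σ)

/-- The (zero-padded) weighted adjacency matrix of the 1-skeleton of the link `X_τ`:
entry `(i,j)` is `w(τ∪{i,j})` when `i ≠ j`, `i,j ∉ τ` and `τ∪{i,j} ∈ X`, and `0` otherwise. -/
def linkMat (X : Finset (Finset (Fin n))) (w : Finset (Fin n) → ℝ)
    (τ : Finset (Fin n)) : Matrix (Fin n) (Fin n) ℝ :=
  Matrix.of fun i j =>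
    if i ≠ j ∧ i ∉ τ ∧ j ∉ τ ∧ insert i (insert j τ) ∈ X then w (insert i (insert j τ)) else 0

/-- `(X,w)` is a 0-local spectral expander: for every face `τ` of cardinality at most `d−2`,
the link adjacency matrix `A_τ` has at most one strictly positive eigenvalue
(counted with multiplicity). -/
def IsZeroLSE (X : Finset (Finset (Fin n))) (d : ℕ) (w : Finset (Fin n) → ℝ) : Prop :=
  ∀ τ ∈ X, τ.card ≤ d - 2 →
    ∀ hA : (linkMat n X w τ).IsHermitian,
      (Finset.univ.filter fun i => 0 < hA.eigenvalues i).card ≤ 1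

/-- The faces of cardinality `k`, as a type. -/
abbrev Face (X : Finset (Finset (Fin n))) (k : ℕ) := {τ : Finset (Fin n) // τ ∈ X ∧ τ.card = k}

/-- The upper walk matrix `P_k^∧`, indexed by `X(k)`. -/
def Pup (X : Finset (Finset (Fin n))) (w : Finset (Fin n) → ℝ) (k : ℕ) :
    Matrix (Face n X k) (Face n X k) ℝ :=
  Matrix.of fun τ σ =>
    if τ = σ then 1 / ((k : ℝ) + 1)
    else if τ.1 ∪ σ.1 ∈ X ∧ (τ.1 ∪ σ.1).card = k + 1 then
      w (τ.1 ∪ σ.1) / (((k : ℝ) + 1) * w τ.1)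
    else 0

/-- The lower walk matrix `P_k^∨`, indexed by `X(k)`. -/
def Pdown (X : Finset (Finset (Fin n))) (w : Finset (Fin n) → ℝ) (k : ℕ) :
    Matrix (Face n X k) (Face n X k) ℝ :=
  Matrix.of fun σ σ' =>
    if σ = σ' then ∑ τ ∈ X.filter (fun τ => τ ⊆ σ.1 ∧ τ.card = k - 1), w σ.1 / ((k : ℝ) * w τ)
    else if σ.1 ∩ σ'.1 ∈ X ∧ (σ.1 ∩ σ'.1).card = k - 1 then
      w σ'.1 / ((k : ℝ) * w (σ.1 ∩ σ'.1))
    else 0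


/-- The symmetrized upper walk matrix `Q_k = D_k^{1/2} P_k^∧ D_k^{-1/2}`. -/
def Qup (X : Finset (Finset (Fin n))) (w : Finset (Fin n) → ℝ) (k : ℕ) :
    Matrix (Face n X k) (Face n X k) ℝ :=
  Matrix.of fun τ σ => Real.sqrt (w τ.1) * Pup n X w k τ σ / Real.sqrt (w σ.1)

open scoped RealInnerProductSpace

namespace SpecCount


variable {m : Type*} [Fintype m] [DecidableEq m]

lemma inner_eq_dot (x y : EuclideanSpace ℝ m) : ⟪x, y⟫ = ⇑x ⬝ᵥ ⇑y := by
  simp [PiLp.inner_apply, RCLike.inner_apply, dotProduct, mul_comm]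

lemma dot_symm {A : Matrix m m ℝ} (hA : A.IsHermitian) (x y : m → ℝ) :
    x ⬝ᵥ (A *ᵥ y) = (A *ᵥ x) ⬝ᵥ y := by
  rw [Matrix.dotProduct_mulVec, ← Matrix.mulVec_transpose]
  have : Aᵀ = A := by
    have := hA; rwa [Matrix.IsHermitian, Matrix.conjTranspose_eq_transpose_of_trivial] at this
  rw [this]

/-- a subspace on which the quadratic form of `A` is everywhere `> t`. -/
def Good (A : Matrix m m ℝ) (t : ℝ) (W : Submodule ℝ (EuclideanSpace ℝ m)) : Prop :=
  ∀ x ∈ W, x ≠ 0 → t * (⇑x ⬝ᵥ ⇑x) < ⇑x ⬝ᵥ (A *ᵥ ⇑x)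

variable {A : Matrix m m ℝ} (hA : A.IsHermitian) (t : ℝ)

lemma coord_decomp (x : EuclideanSpace ℝ m) :
    ⇑x ⬝ᵥ (A *ᵥ ⇑x) = ∑ i, hA.eigenvalues i * ⟪hA.eigenvectorBasis i, x⟫ ^ 2 := by
  have h1 : ∀ y : EuclideanSpace ℝ m, ⟪x, y⟫ = ∑ i, ⟪x, hA.eigenvectorBasis i⟫ * ⟪hA.eigenvectorBasis i, y⟫ :=
    fun y => (hA.eigenvectorBasis.sum_inner_mul_inner x y).symm
  have hAx : ⇑x ⬝ᵥ (A *ᵥ ⇑x) = ⟪x, (WithLp.equiv 2 _).symm (A *ᵥ ⇑x)⟫ := by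
    rw [inner_eq_dot]; rfl
  rw [hAx, h1]
  congr 1; funext i
  have h2 : ⟪hA.eigenvectorBasis i, (WithLp.equiv 2 _).symm (A *ᵥ ⇑x)⟫
      = hA.eigenvalues i * ⟪hA.eigenvectorBasis i, x⟫ := by
    rw [inner_eq_dot, inner_eq_dot]
    have : ⇑((WithLp.equiv 2 (m → ℝ)).symm (A *ᵥ ⇑x)) = A *ᵥ ⇑x := rfl
    rw [this, dot_symm hA, hA.mulVec_eigenvectorBasis]
    simp only [dotProduct, Pi.smul_apply, smul_eq_mul, Finset.mul_sum]
    congr 1; funext j; ring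
  rw [h2, real_inner_comm]
  ring

lemma parseval (x : EuclideanSpace ℝ m) :
    ⇑x ⬝ᵥ ⇑x = ∑ i, ⟪hA.eigenvectorBasis i, x⟫ ^ 2 := by
  rw [← inner_eq_dot]
  have := (hA.eigenvectorBasis.sum_inner_mul_inner x x).symm
  rw [this]
  congr 1; funext i; rw [real_inner_comm x]; ring

/-- E2 : any good subspace has dimension at most the number of eigenvalues `> t`. -/
lemma good_le (W : Submodule ℝ (EuclideanSpace ℝ m)) (hW : Good A t W) :
    Module.finrank ℝ W ≤ (Finset.univ.filter fun i => t < hA.eigenvalues i).card := by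
  classical
  set S := (Finset.univ.filter fun i => t < hA.eigenvalues i) with hS
  let L : W →ₗ[ℝ] (S → ℝ) :=
    LinearMap.pi (fun i : S => (innerSL ℝ (hA.eigenvectorBasis i.1)).toLinearMap ∘ₗ W.subtype)
  have hinj : Function.Injective L := by
    rw [← LinearMap.ker_eq_bot, LinearMap.ker_eq_bot']
    intro x hx
    by_contra hxne
    have hxne' : (x : EuclideanSpace ℝ m) ≠ 0 := by
      simpa [Submodule.coe_eq_zero] using hxne
    have hzero : ∀ i ∈ S, ⟪hA.eigenvectorBasis i, (x : EuclideanSpace ℝ m)⟫ = 0 := by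
      intro i hi
      have := congrFun hx ⟨i, hi⟩
      simpa [L] using this
    have hle : ⇑(x : EuclideanSpace ℝ m) ⬝ᵥ (A *ᵥ ⇑(x : EuclideanSpace ℝ m))
        ≤ t * (⇑(x : EuclideanSpace ℝ m) ⬝ᵥ ⇑(x : EuclideanSpace ℝ m)) := by
      rw [coord_decomp hA, parseval hA, Finset.mul_sum]
      apply Finset.sum_le_sum
      intro i _
      by_cases hiS : i ∈ S
      · rw [hzero i hiS]; simp
      · have : ¬ t < hA.eigenvalues i := by simpa [hS] using hiS
        have h2 : (0:ℝ) ≤ ⟪hA.eigenvectorBasis i, (x : EuclideanSpace ℝ m)⟫ ^ 2 := sq_nonneg _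
        nlinarith [not_lt.1 this]
    exact absurd hle (not_le.2 (hW x x.2 hxne'))
  calc Module.finrank ℝ W ≤ Module.finrank ℝ (S → ℝ) :=
        LinearMap.finrank_le_finrank_of_injective hinj
    _ = S.card := by simp [Module.finrank_pi]

/-- E1 : there is a good subspace of dimension the number of eigenvalues `> t`. -/
lemma exists_good : ∃ W : Submodule ℝ (EuclideanSpace ℝ m), Good A t W ∧
    Module.finrank ℝ W = (Finset.univ.filter fun i => t < hA.eigenvalues i).card := by
  classical
  set S := (Finset.univ.filter fun i => t < hA.eigenvalues i) with hS
  refine ⟨Submodule.span ℝ (Set.range fun i : S => hA.eigenvectorBasis i.1), ?_, ?_⟩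
  · intro x hx hxne
    -- coordinates vanish off S
    have hzero : ∀ i, i ∉ S → ⟪hA.eigenvectorBasis i, x⟫ = 0 := by
      intro i hi
      have hsub : Submodule.span ℝ (Set.range fun j : S => hA.eigenvectorBasis j.1)
          ≤ LinearMap.ker (innerSL ℝ (hA.eigenvectorBasis i)).toLinearMap := by
        rw [Submodule.span_le]
        rintro _ ⟨j, rfl⟩
        have hne : i ≠ j.1 := by rintro rfl; exact hi j.2
        simpa using hA.eigenvectorBasis.orthonormal.2 hne
      have := hsub hx
      simpa using this
    rw [coord_decomp hA, parseval hA, Finset.mul_sum]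
    have hex : ∃ i ∈ S, ⟪hA.eigenvectorBasis i, x⟫ ≠ 0 := by
      by_contra hc
      push_neg at hc
      have : ∀ i, ⟪hA.eigenvectorBasis i, x⟫ = 0 := by
        intro i; by_cases hi : i ∈ S
        · exact hc i hi
        · exact hzero i hi
      have hx0 : ⇑x ⬝ᵥ ⇑x = 0 := by rw [parseval hA]; simp [this]
      have : ⟪x, x⟫ = 0 := by rw [inner_eq_dot]; exact hx0
      exact hxne (inner_self_eq_zero.mp this)
    obtain ⟨i₀, hi₀, hc₀⟩ := hex
    apply Finset.sum_lt_sum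
    · intro i _
      by_cases hi : i ∈ S
      · have : t < hA.eigenvalues i := by simpa [hS] using hi
        nlinarith [sq_nonneg ⟪hA.eigenvectorBasis i, x⟫]
      · rw [hzero i hi]; simp
    · refine ⟨i₀, Finset.mem_univ _, ?_⟩
      have : t < hA.eigenvalues i₀ := by simpa [hS] using hi₀
      have h2 : 0 < ⟪hA.eigenvectorBasis i₀, x⟫ ^ 2 := by positivity
      nlinarith
  · rw [finrank_span_eq_card]
    · simp
    · have h1 : LinearIndependent ℝ (fun i => hA.eigenvectorBasis i) :=
        hA.eigenvectorBasis.orthonormal.linearIndependent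
      exact h1.comp _ Subtype.val_injective

variable {m' : Type*} [Fintype m'] [DecidableEq m']

/-- transfer a good subspace for `A` at `t` (with `c*t = s+1`) to one of the same
dimension for `B` at `s/c'`, given the Garland inequality and `VᵀV = c' • B`. -/
lemma transfer (A : Matrix m m ℝ) (B : Matrix m' m' ℝ) (V : Matrix m m' ℝ)
    (c c' t s : ℝ) (hc : 0 < c) (hc' : 0 < c') (hs : 0 ≤ s) (hts : c * t = s + 1)
    (H1 : ∀ x : m → ℝ, c * (x ⬝ᵥ (A *ᵥ x)) ≤ x ⬝ᵥ x + (Vᵀ *ᵥ x) ⬝ᵥ (Vᵀ *ᵥ x))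
    (H2 : ∀ y : m' → ℝ, (V *ᵥ y) ⬝ᵥ (V *ᵥ y) = c' * (y ⬝ᵥ (B *ᵥ y)))
    (W : Submodule ℝ (EuclideanSpace ℝ m)) (hW : Good A t W) :
    ∃ W' : Submodule ℝ (EuclideanSpace ℝ m'), Good B (s / c') W' ∧
      Module.finrank ℝ W' = Module.finrank ℝ W := by
  classical
  let f : W →ₗ[ℝ] EuclideanSpace ℝ m' := (Matrix.toEuclideanLin Vᵀ) ∘ₗ W.subtype
  -- key pointwise facts
  have key : ∀ x : EuclideanSpace ℝ m, x ∈ W → x ≠ 0 →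
      s * (⇑x ⬝ᵥ ⇑x) < (Vᵀ *ᵥ ⇑x) ⬝ᵥ (Vᵀ *ᵥ ⇑x) := by
    intro x hx hxne
    have h1 := hW x hx hxne
    have h2 := H1 ⇑x
    have h3 : c * (t * (⇑x ⬝ᵥ ⇑x)) < c * (⇑x ⬝ᵥ (A *ᵥ ⇑x)) := by
      exact (mul_lt_mul_iff_right₀ hc).2 h1
    have h4 : (s + 1) * (⇑x ⬝ᵥ ⇑x) = c * (t * (⇑x ⬝ᵥ ⇑x)) := by rw [← hts]; ring
    linarith
  have hnorm : ∀ x : EuclideanSpace ℝ m, 0 ≤ ⇑x ⬝ᵥ ⇑x := by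
    intro x; exact Finset.sum_nonneg fun i _ => mul_self_nonneg _
  have hxpos : ∀ x : EuclideanSpace ℝ m, x ≠ 0 → 0 < ⇑x ⬝ᵥ ⇑x := by
    intro x hxne
    rcases (hnorm x).lt_or_eq with h | h
    · exact h
    · exfalso; apply hxne
      have : ∀ i, x i = 0 := by
        intro i
        by_contra hi
        have : 0 < ⇑x ⬝ᵥ ⇑x := by
          apply Finset.sum_pos'
          · intro j _; exact mul_self_nonneg _
          · exact ⟨i, Finset.mem_univ _, mul_self_pos.2 hi⟩
        linarith
      ext i; simpa using this i
  have hf : ∀ x : EuclideanSpace ℝ m, ⇑(Matrix.toEuclideanLin Vᵀ x) = Vᵀ *ᵥ ⇑x := fun _ => rfl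
  have hfinj : Function.Injective f := by
    rw [← LinearMap.ker_eq_bot, LinearMap.ker_eq_bot']
    intro x hx0
    by_contra hxne
    have hxne' : (x : EuclideanSpace ℝ m) ≠ 0 := by simpa [Submodule.coe_eq_zero] using hxne
    have := key x x.2 hxne'
    have h0 : Vᵀ *ᵥ ⇑(x : EuclideanSpace ℝ m) = 0 := by
      have : (Matrix.toEuclideanLin Vᵀ) (x : EuclideanSpace ℝ m) = 0 := hx0
      rw [← hf]; exact congrArg _ this
    rw [h0] at this
    simp only [zero_dotProduct] at this
    nlinarith [hxpos _ hxne', hs]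
  refine ⟨LinearMap.range f, ?_, LinearMap.finrank_range_of_inj hfinj⟩
  intro y hy hyne
  obtain ⟨x, rfl⟩ := hy
  have hxne : (x : EuclideanSpace ℝ m) ≠ 0 := by
    rintro h
    apply hyne
    have : x = 0 := Subtype.ext h
    rw [this]; exact map_zero f
  have hk := key x x.2 hxne
  set xv : m → ℝ := ⇑(x : EuclideanSpace ℝ m) with hxv
  have hfy : ⇑(f x) = Vᵀ *ᵥ xv := rfl
  -- p := xᵀ V Vᵀ x = ‖Vᵀx‖²
  have hp : (Vᵀ *ᵥ xv) ⬝ᵥ (Vᵀ *ᵥ xv) = xv ⬝ᵥ (V *ᵥ (Vᵀ *ᵥ xv)) := by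
    rw [Matrix.dotProduct_mulVec xv, ← Matrix.mulVec_transpose]
  set z : m → ℝ := V *ᵥ (Vᵀ *ᵥ xv) with hz
  have hBform : ⇑(f x) ⬝ᵥ (B *ᵥ ⇑(f x)) = (z ⬝ᵥ z) / c' := by
    rw [hfy, eq_div_iff (ne_of_gt hc')]
    have h5 := H2 (Vᵀ *ᵥ xv)
    rw [← hz] at h5
    linarith
  have hyy : ⇑(f x) ⬝ᵥ ⇑(f x) = xv ⬝ᵥ z := by rw [hfy, hp, hz]
  -- Cauchy-Schwarz : (xv ⬝ z)² ≤ (xv⬝xv)(z⬝z)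
  have hcs : (xv ⬝ᵥ z) ^ 2 ≤ (xv ⬝ᵥ xv) * (z ⬝ᵥ z) := by
    have := Finset.sum_mul_sq_le_sq_mul_sq Finset.univ xv z
    simpa [dotProduct, pow_two] using this
  have hxMx : s * (xv ⬝ᵥ xv) < xv ⬝ᵥ z := by rw [← hp]; exact hk
  have hxx : 0 < xv ⬝ᵥ xv := hxpos _ hxne
  have hppos : 0 < xv ⬝ᵥ z := lt_of_le_of_lt (by positivity) hxMx
  -- conclude : s * (xv⬝z) < z⬝z
  have hfin : s * (xv ⬝ᵥ z) < z ⬝ᵥ z := by nlinarith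
  rw [hyy, hBform, div_mul_eq_mul_div, div_lt_div_iff₀ hc' hc']
  nlinarith
lemma reverse_cs {A : Matrix m m ℝ} (hA : A.IsHermitian)
    (hcount : (Finset.univ.filter fun i => 0 < hA.eigenvalues i).card ≤ 1)
    (y : m → ℝ) (hy : 0 < y ⬝ᵥ (A *ᵥ y)) (x : m → ℝ) :
    (x ⬝ᵥ (A *ᵥ x)) * (y ⬝ᵥ (A *ᵥ y)) ≤ (x ⬝ᵥ (A *ᵥ y)) ^ 2 := by
  classical
  by_contra hgt
  push_neg at hgt
  have hyne : y ≠ 0 := by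
    rintro rfl; simp at hy
  set p := x ⬝ᵥ (A *ᵥ x) with hp
  set q := x ⬝ᵥ (A *ᵥ y) with hq
  set r := y ⬝ᵥ (A *ᵥ y) with hr
  have hqyx : y ⬝ᵥ (A *ᵥ x) = q := by
    rw [hq, dot_symm hA x y, dotProduct_comm]
  -- the span of x and y
  set xE : EuclideanSpace ℝ m := (WithLp.equiv 2 (m → ℝ)).symm x with hxE
  set yE : EuclideanSpace ℝ m := (WithLp.equiv 2 (m → ℝ)).symm y with hyE
  set W : Submodule ℝ (EuclideanSpace ℝ m) := Submodule.span ℝ {xE, yE} with hW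
  have hGood : Good A 0 W := by
    intro z hz hzne
    obtain ⟨a, b, hab⟩ := Submodule.mem_span_pair.1 hz
    have hzv : ⇑z = a • x + b • y := by
      rw [← hab]; rfl
    have habne : ¬ (a = 0 ∧ b = 0) := by
      rintro ⟨rfl, rfl⟩
      apply hzne
      rw [← hab]; simp
    have hform : ⇑z ⬝ᵥ (A *ᵥ ⇑z) = a ^ 2 * p + 2 * a * b * q + b ^ 2 * r := by
      rw [hzv]
      simp only [Matrix.mulVec_add, Matrix.mulVec_smul, add_dotProduct,
        smul_dotProduct, dotProduct_add, dotProduct_smul,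
        smul_eq_mul]
      rw [hqyx]
      ring
    have hkey : 0 < r * (⇑z ⬝ᵥ (A *ᵥ ⇑z)) := by
      rw [hform]
      have hexp : r * (a ^ 2 * p + 2 * a * b * q + b ^ 2 * r)
          = (a * q + b * r) ^ 2 + a ^ 2 * (p * r - q ^ 2) := by ring
      rw [hexp]
      rcases eq_or_ne a 0 with ha | ha
      · have hb : b ≠ 0 := fun hb => habne ⟨ha, hb⟩
        rw [ha]
        have h2 : b * r ≠ 0 := mul_ne_zero hb (ne_of_gt hy)
        have h3 := mul_self_pos.2 h2
        nlinarith
      · have h1 : 0 < a ^ 2 * (p * r - q ^ 2) := by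
          have := hgt
          have ha2 : 0 < a ^ 2 := by positivity
          nlinarith
        nlinarith [sq_nonneg (a * q + b * r)]
    have := hkey
    nlinarith
  have hle := good_le hA 0 W hGood
  have hle1 : Module.finrank ℝ W ≤ 1 := le_trans hle hcount
  have hyEW : yE ∈ W := Submodule.subset_span (by simp)
  have hxEW : xE ∈ W := Submodule.subset_span (by simp)
  have hyEne : yE ≠ 0 := by
    intro h
    apply hyne
    have : y = (WithLp.equiv 2 (m → ℝ)) yE := rfl
    rw [this, h]; rfl
  have hspan : Submodule.span ℝ {yE} ≤ W := by
    rw [Submodule.span_le]; intro z hz; rcases hz with rfl; exact hyEW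
  have h1 : Module.finrank ℝ (Submodule.span ℝ ({yE} : Set (EuclideanSpace ℝ m))) = 1 :=
    finrank_span_singleton hyEne
  have heq : Submodule.span ℝ ({yE} : Set (EuclideanSpace ℝ m)) = W :=
    Submodule.eq_of_le_of_finrank_le hspan (by rw [h1]; exact hle1)
  have hxmem : xE ∈ Submodule.span ℝ ({yE} : Set (EuclideanSpace ℝ m)) := by
    rw [heq]; exact hxEW
  obtain ⟨c, hc⟩ := Submodule.mem_span_singleton.1 hxmem
  have hxy : x = c • y := by
    have : xE = c • yE := hc.symm
    have h2 : (WithLp.equiv 2 (m → ℝ)) xE = (WithLp.equiv 2 (m → ℝ)) (c • yE) := by rw [this]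
    simpa [hxE, hyE] using h2
  have hpq : p = c ^ 2 * r ∧ q = c * r := by
    constructor
    · rw [hp, hxy]
      simp only [Matrix.mulVec_smul, smul_dotProduct, dotProduct_smul, smul_eq_mul]
      rw [← hr]; ring
    · rw [hq, hxy]
      simp only [smul_dotProduct, smul_eq_mul, ← hr]
  obtain ⟨h3, h4⟩ := hpq
  rw [h3, h4] at hgt
  nlinarith
end SpecCount

section Dom
variable {N D : ℕ} {X : Finset (Finset (Fin N))} {w : Finset (Fin N) → ℝ}

/-- unique new element -/
lemma unique_elt {ρ τ : Finset (Fin N)} (hsub : ρ ⊆ τ) (hc : τ.card = ρ.card + 1) :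
    ∃ i, i ∉ ρ ∧ τ = insert i ρ := by
  have h1 : (τ \ ρ).card = 1 := by rw [Finset.card_sdiff_of_subset hsub, hc]; simp
  obtain ⟨i, hi⟩ := Finset.card_eq_one.1 h1
  refine ⟨i, ?_, ?_⟩
  · have : i ∈ τ \ ρ := by rw [hi]; exact Finset.mem_singleton_self i
    exact (Finset.mem_sdiff.1 this).2
  · have h2 : ρ ∪ (τ \ ρ) = τ := Finset.union_sdiff_of_subset hsub
    rw [hi] at h2
    rw [← h2]
    ext x; simp [Finset.mem_insert, Finset.mem_union, or_comm]

lemma insert_eq_insert {ρ : Finset (Fin N)} {i j : Fin N} (hi : i ∉ ρ) 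
    (h : insert i ρ = insert j ρ) : i = j := by
  have : i ∈ insert j ρ := by rw [← h]; exact Finset.mem_insert_self i ρ
  rcases Finset.mem_insert.1 this with h' | h'
  · exact h'
  · exact absurd h' hi

lemma qup_herm (hpos : ∀ τ ∈ X, 0 < w τ) (k : ℕ) : (Qup N X w k).IsHermitian := by
  rw [Matrix.IsHermitian, Matrix.conjTranspose_eq_transpose_of_trivial]
  ext σ τ
  simp only [Matrix.transpose_apply, Qup, Pup, Matrix.of_apply]
  rcases eq_or_ne τ σ with rfl | hne
  · simp
  · have hne' : σ ≠ τ := hne.symm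
    rw [if_neg hne, if_neg hne']
    have hu : σ.1 ∪ τ.1 = τ.1 ∪ σ.1 := Finset.union_comm _ _
    rw [hu]
    by_cases hc : τ.1 ∪ σ.1 ∈ X ∧ (τ.1 ∪ σ.1).card = k + 1
    · rw [if_pos hc, if_pos hc]
      have key : ∀ a b c : ℝ, 0 < a → 0 < b →
          Real.sqrt a * (c / (((k:ℝ)+1) * a)) / Real.sqrt b
            = Real.sqrt b * (c / (((k:ℝ)+1) * b)) / Real.sqrt a := by
        intro a b c ha hb
        have sa : (0:ℝ) < Real.sqrt a := Real.sqrt_pos.2 ha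
        have sb : (0:ℝ) < Real.sqrt b := Real.sqrt_pos.2 hb
        have ea : Real.sqrt a * Real.sqrt a = a := Real.mul_self_sqrt ha.le
        have eb : Real.sqrt b * Real.sqrt b = b := Real.mul_self_sqrt hb.le
        have hk : (0:ℝ) < (k:ℝ)+1 := by positivity
        field_simp
        linear_combination (c*b) * ea - (c*a) * eb
      exact key _ _ _ (hpos _ τ.2.1) (hpos _ σ.2.1)
    · rw [if_neg hc, if_neg hc]; simp
  
lemma link_herm (τ : Finset (Fin N)) : (linkMat N X w τ).IsHermitian := by
  rw [Matrix.IsHermitian, Matrix.conjTranspose_eq_transpose_of_trivial]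
  ext i j
  simp only [Matrix.transpose_apply, linkMat, Matrix.of_apply]
  have hins : insert j (insert i τ) = insert i (insert j τ) := Finset.insert_comm j i τ
  by_cases hc : j ≠ i ∧ j ∉ τ ∧ i ∉ τ ∧ insert j (insert i τ) ∈ X
  · rw [if_pos hc, if_pos ⟨hc.1.symm, hc.2.2.1, hc.2.1, by rw [← hins]; exact hc.2.2.2⟩, hins]
  · rw [if_neg hc, if_neg ?_]
    rintro ⟨h1, h2, h3, h4⟩
    exact hc ⟨h1.symm, h3, h2, by rw [hins]; exact h4⟩

/-- row sums of the link adjacency matrix -/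
lemma link_row_sum (hdc : ∀ σ ∈ X, ∀ τ ⊆ σ, τ ∈ X)
    (hbal : ∀ τ ∈ X, τ.card < D → w τ = ∑ σ ∈ X.filter (fun σ => τ ⊆ σ ∧ σ.card = τ.card + 1), w σ)
    {ρ : Finset (Fin N)} {i : Fin N} (hi : i ∉ ρ) (hmem : insert i ρ ∈ X)
    (hcard : (insert i ρ).card < D) :
    ∑ j, linkMat N X w ρ i j = w (insert i ρ) := by
  rw [hbal _ hmem hcard]
  rw [← Finset.sum_filter_of_ne (p := fun j => j ≠ i ∧ j ∉ ρ ∧ insert i (insert j ρ) ∈ X)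
    (by
      intro j _ hne
      simp only [linkMat, Matrix.of_apply, ne_eq] at hne
      by_contra hcon
      apply hne
      rw [if_neg]
      rintro ⟨h1, h2, h3, h4⟩
      exact hcon ⟨fun h => h1 h.symm, h3, h4⟩)]
  refine Finset.sum_bij (fun j _ => insert i (insert j ρ)) ?_ ?_ ?_ ?_
  · intro j hj
    simp only [Finset.mem_filter, Finset.mem_univ, true_and] at hj
    obtain ⟨hji, hjρ, hmem'⟩ := hj
    simp only [Finset.mem_filter]
    have hcomm : insert i (insert j ρ) = insert j (insert i ρ) := Finset.insert_comm i j ρ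
    refine ⟨hmem', ?_, ?_⟩
    · rw [hcomm]; exact Finset.subset_insert _ _
    · rw [hcomm, Finset.card_insert_of_notMem (by
        simp only [Finset.mem_insert]
        rintro (rfl | h) <;> [exact hji rfl; exact hjρ h])]
  · intro j hj j' hj' heq
    simp only [Finset.mem_filter, Finset.mem_univ, true_and] at hj hj'
    have heq' : insert i (insert j ρ) = insert i (insert j' ρ) := heq
    have : j ∈ insert i (insert j' ρ) := by
      rw [← heq']; exact Finset.mem_insert_of_mem (Finset.mem_insert_self _ _)
    simp only [Finset.mem_insert] at this
    rcases this with rfl | rfl | h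
    · exact absurd rfl hj.1
    · rfl
    · exact absurd h hj.2.1
  · intro σ hσ
    simp only [Finset.mem_filter] at hσ
    obtain ⟨hσX, hsub, hcard'⟩ := hσ
    obtain ⟨j, hjτ, hσeq⟩ := unique_elt hsub hcard'
    have hji : j ≠ i := by rintro rfl; exact hjτ (Finset.mem_insert_self _ _)
    have hjρ : j ∉ ρ := fun h => hjτ (Finset.mem_insert_of_mem h)
    have hcomm : insert i (insert j ρ) = insert j (insert i ρ) := Finset.insert_comm i j ρ
    refine ⟨j, ?_, ?_⟩
    · simp only [Finset.mem_filter, Finset.mem_univ, true_and]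
      exact ⟨hji, hjρ, by rw [hcomm, ← hσeq]; exact hσX⟩
    · show insert i (insert j ρ) = σ
      rw [hcomm, ← hσeq]
  · intro j hj
    simp only [Finset.mem_filter, Finset.mem_univ, true_and] at hj
    obtain ⟨hji, hjρ, hmem'⟩ := hj
    simp only [linkMat, Matrix.of_apply]
    rw [if_pos ⟨fun h => hji h.symm, hi, hjρ, hmem'⟩]

end Dom

section Dom2
variable {N D : ℕ} {X : Finset (Finset (Fin N))} {w : Finset (Fin N) → ℝ}

/-- the rectangular "up" matrix -/
def Vmat (N : ℕ) (X : Finset (Finset (Fin N))) (w : Finset (Fin N) → ℝ) (k : ℕ) :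
    Matrix (Face N X k) (Face N X (k-1)) ℝ :=
  Matrix.of fun σ ρ => if ρ.1 ⊆ σ.1 then Real.sqrt (w σ.1) / Real.sqrt (w ρ.1) else 0

/-- the "lift" matrices -/
def lM (N : ℕ) (X : Finset (Finset (Fin N))) (w : Finset (Fin N) → ℝ) (k : ℕ)
    (ρ : Finset (Fin N)) : Fin N → Face N X k → ℝ :=
  fun i σ => if σ.1 = insert i ρ ∧ i ∉ ρ then 1 / Real.sqrt (w σ.1) else 0

lemma sum_insert_bij {ρ : Finset (Fin N)} (f : Finset (Fin N) → ℝ) :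
    ∑ σ ∈ X.filter (fun σ => ρ ⊆ σ ∧ σ.card = ρ.card + 1), f σ
      = ∑ i ∈ Finset.univ.filter (fun i => i ∉ ρ ∧ insert i ρ ∈ X), f (insert i ρ) := by
  refine (Finset.sum_bij (fun i _ => insert i ρ) ?_ ?_ ?_ ?_).symm
  · intro i hi
    simp only [Finset.mem_filter, Finset.mem_univ, true_and] at hi
    simp only [Finset.mem_filter]
    exact ⟨hi.2, Finset.subset_insert _ _, Finset.card_insert_of_notMem hi.1⟩
  · intro i hi i' hi' heq
    simp only [Finset.mem_filter, Finset.mem_univ, true_and] at hi hi'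
    exact insert_eq_insert hi.1 heq
  · intro σ hσ
    simp only [Finset.mem_filter] at hσ
    obtain ⟨hσX, hsub, hcard⟩ := hσ
    obtain ⟨i, hiρ, hσeq⟩ := unique_elt hsub hcard
    refine ⟨i, ?_, hσeq.symm⟩
    simp only [Finset.mem_filter, Finset.mem_univ, true_and]
    exact ⟨hiρ, hσeq ▸ hσX⟩
  · intro i _; rfl

lemma link_zero_of_mem {ρ : Finset (Fin N)} {i : Fin N} (hi : i ∈ ρ) (j : Fin N) :
    linkMat N X w ρ i j = 0 := by
  simp only [linkMat, Matrix.of_apply]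
  rw [if_neg]; rintro ⟨_, h2, _, _⟩; exact h2 hi

lemma link_zero_of_not_mem (hdc : ∀ σ ∈ X, ∀ τ ⊆ σ, τ ∈ X) {ρ : Finset (Fin N)} {i : Fin N}
    (hi : insert i ρ ∉ X) (j : Fin N) : linkMat N X w ρ i j = 0 := by
  simp only [linkMat, Matrix.of_apply]
  rw [if_neg]; rintro ⟨_, _, _, h4⟩
  exact hi (hdc _ h4 _ (by
    intro x hx
    rcases Finset.mem_insert.1 hx with rfl | hx
    · exact Finset.mem_insert_self _ _
    · exact Finset.mem_insert_of_mem (Finset.mem_insert_of_mem hx)))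

lemma link_total (hdc : ∀ σ ∈ X, ∀ τ ⊆ σ, τ ∈ X)
    (hbal : ∀ τ ∈ X, τ.card < D → w τ = ∑ σ ∈ X.filter (fun σ => τ ⊆ σ ∧ σ.card = τ.card + 1), w σ)
    {ρ : Finset (Fin N)} (hρX : ρ ∈ X) (hd1 : ρ.card < D) (hd2 : ρ.card + 1 < D) :
    (1 : Fin N → ℝ) ⬝ᵥ (linkMat N X w ρ *ᵥ (1 : Fin N → ℝ)) = w ρ := by
  have hrow : ∀ i : Fin N, (linkMat N X w ρ *ᵥ (1 : Fin N → ℝ)) i = ∑ j, linkMat N X w ρ i j := by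
    intro i; simp [Matrix.mulVec, dotProduct]
  have h1 : (1 : Fin N → ℝ) ⬝ᵥ (linkMat N X w ρ *ᵥ (1 : Fin N → ℝ))
      = ∑ i, ∑ j, linkMat N X w ρ i j := by
    simp only [dotProduct, Pi.one_apply, one_mul]
    exact Finset.sum_congr rfl fun i _ => hrow i
  rw [h1, hbal _ hρX hd1, sum_insert_bij]
  rw [← Finset.sum_filter_of_ne (p := fun i => i ∉ ρ ∧ insert i ρ ∈ X) ?_]
  · apply Finset.sum_congr rfl
    intro i hi
    simp only [Finset.mem_filter, Finset.mem_univ, true_and] at hi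
    apply link_row_sum (D := D) hdc hbal hi.1 hi.2
    rwa [Finset.card_insert_of_notMem hi.1]
  · intro i _ hne
    constructor
    · intro hiρ
      exact hne (Finset.sum_eq_zero fun j _ => link_zero_of_mem hiρ j)
    · by_contra hmem
      exact hne (Finset.sum_eq_zero fun j _ => link_zero_of_not_mem hdc hmem j)

end Dom2

section Dom3
variable {N D : ℕ} {X : Finset (Finset (Fin N))} {w : Finset (Fin N) → ℝ}

lemma sqrt_div_self' {a : ℝ} (ha : 0 < a) : Real.sqrt a / Real.sqrt a = 1 :=
  div_self (ne_of_gt (Real.sqrt_pos.2 ha))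

lemma garland_entry (hpos : ∀ τ ∈ X, 0 < w τ) (hdc : ∀ σ ∈ X, ∀ τ ⊆ σ, τ ∈ X)
    {k : ℕ} (hk1 : 1 ≤ k) (σ σ' : Face N X k) :
    ((k:ℝ)+1) * Qup N X w k σ σ' = (if σ = σ' then 1 else 0) +
      ∑ ρ : Face N X (k-1), ∑ i, ∑ j,
        lM N X w k ρ.1 i σ * linkMat N X w ρ.1 i j * lM N X w k ρ.1 j σ' := by
  rcases eq_or_ne σ σ' with rfl | hne
  · -- diagonal case
    have hLHS : ((k:ℝ)+1) * Qup N X w k σ σ = 1 := by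
      simp only [Qup, Pup, Matrix.of_apply, if_pos rfl]
      have h1 : 0 < w σ.1 := hpos _ σ.2.1
      have hk : ((k:ℝ)+1) ≠ 0 := by positivity
      rw [if_pos trivial]; field_simp
    rw [hLHS, if_pos rfl]
    have hsum : ∑ ρ : Face N X (k-1), ∑ i, ∑ j,
        lM N X w k ρ.1 i σ * linkMat N X w ρ.1 i j * lM N X w k ρ.1 j σ = 0 := by
      apply Finset.sum_eq_zero; intro ρ _
      apply Finset.sum_eq_zero; intro i _
      apply Finset.sum_eq_zero; intro j _
      by_cases h1 : σ.1 = insert i ρ.1 ∧ i ∉ ρ.1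
      · by_cases h2 : σ.1 = insert j ρ.1 ∧ j ∉ ρ.1
        · have hij : i = j := insert_eq_insert h1.2 (h1.1.symm.trans h2.1)
          subst hij
          simp [linkMat]
        · simp [lM, h2]
      · simp [lM, h1]
    rw [hsum]; ring
  · -- off-diagonal case
    rw [if_neg hne]
    have hcards : σ.1.card = k := σ.2.2
    have hcards' : σ'.1.card = k := σ'.2.2
    have hne1 : σ.1 ≠ σ'.1 := fun h => hne (Subtype.ext h)
    by_cases hc : σ.1 ∪ σ'.1 ∈ X ∧ (σ.1 ∪ σ'.1).card = k + 1
    · -- the union is a face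
      have hicard : (σ.1 ∩ σ'.1).card = k - 1 := by
        have := Finset.card_union_add_card_inter σ.1 σ'.1
        omega
      have hiX : σ.1 ∩ σ'.1 ∈ X := hdc _ σ.2.1 _ Finset.inter_subset_left
      set ρ₀ : Face N X (k-1) := ⟨σ.1 ∩ σ'.1, hiX, hicard⟩ with hρ₀
      obtain ⟨i₀, hi₀ρ, hi₀⟩ := unique_elt (show σ.1 ∩ σ'.1 ⊆ σ.1 from Finset.inter_subset_left)
        (show σ.1.card = (σ.1 ∩ σ'.1).card + 1 by rw [hicard, hcards]; omega)
      obtain ⟨j₀, hj₀ρ, hj₀⟩ := unique_elt (show σ.1 ∩ σ'.1 ⊆ σ'.1 from Finset.inter_subset_right)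
        (show σ'.1.card = (σ.1 ∩ σ'.1).card + 1 by rw [hicard, hcards']; omega)
      have hij : i₀ ≠ j₀ := by
        rintro rfl
        apply hi₀ρ
        have h1 : i₀ ∈ σ.1 := by rw [hi₀]; exact Finset.mem_insert_self _ _
        have h2 : i₀ ∈ σ'.1 := by rw [hj₀]; exact Finset.mem_insert_self _ _
        exact Finset.mem_inter.2 ⟨h1, h2⟩
      have huni : insert i₀ (insert j₀ (σ.1 ∩ σ'.1)) = σ.1 ∪ σ'.1 := by
        ext x
        simp only [Finset.mem_insert, Finset.mem_union, Finset.mem_inter]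
        constructor
        · rintro (rfl | rfl | ⟨h1, h2⟩)
          · left; rw [hi₀]; exact Finset.mem_insert_self _ _
          · right; rw [hj₀]; exact Finset.mem_insert_self _ _
          · exact Or.inl h1
        · rintro (h | h)
          · rw [hi₀] at h
            rcases Finset.mem_insert.1 h with rfl | h
            · exact Or.inl rfl
            · right; right; exact Finset.mem_inter.1 h
          · rw [hj₀] at h
            rcases Finset.mem_insert.1 h with rfl | h
            · exact Or.inr (Or.inl rfl)
            · right; right; exact Finset.mem_inter.1 h
      -- collapse the sums
      have hsum : ∑ ρ : Face N X (k-1), ∑ i, ∑ j,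
          lM N X w k ρ.1 i σ * linkMat N X w ρ.1 i j * lM N X w k ρ.1 j σ'
          = (1 / Real.sqrt (w σ.1)) * w (σ.1 ∪ σ'.1) * (1 / Real.sqrt (w σ'.1)) := by
        rw [Finset.sum_eq_single ρ₀]
        · rw [Finset.sum_eq_single i₀]
          · rw [Finset.sum_eq_single j₀]
            · have e1 : lM N X w k ρ₀.1 i₀ σ = 1 / Real.sqrt (w σ.1) := by
                rw [lM, if_pos ⟨hi₀, hi₀ρ⟩]
              have e2 : lM N X w k ρ₀.1 j₀ σ' = 1 / Real.sqrt (w σ'.1) := by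
                rw [lM, if_pos ⟨hj₀, hj₀ρ⟩]
              have e3 : linkMat N X w ρ₀.1 i₀ j₀ = w (σ.1 ∪ σ'.1) := by
                simp only [linkMat, Matrix.of_apply]
                rw [if_pos ⟨hij, hi₀ρ, hj₀ρ, by rw [huni]; exact hc.1⟩, huni]
              rw [e1, e2, e3]
            · intro j _ hjne
              have : lM N X w k ρ₀.1 j σ' = 0 := by
                rw [lM, if_neg]
                rintro ⟨h1, h2⟩
                exact hjne (insert_eq_insert h2 (h1.symm.trans hj₀))
              simp [this]
            · intro h; exact absurd (Finset.mem_univ _) h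
          · intro i _ hine
            have : lM N X w k ρ₀.1 i σ = 0 := by
              rw [lM, if_neg]
              rintro ⟨h1, h2⟩
              exact hine (insert_eq_insert h2 (h1.symm.trans hi₀))
            rw [this]
            apply Finset.sum_eq_zero; intro j _; ring
          · intro h; exact absurd (Finset.mem_univ _) h
        · intro ρ _ hρne
          apply Finset.sum_eq_zero; intro i _
          apply Finset.sum_eq_zero; intro j _
          by_cases h1 : σ.1 = insert i ρ.1 ∧ i ∉ ρ.1
          · by_cases h2 : σ'.1 = insert j ρ.1 ∧ j ∉ ρ.1
            · exfalso
              apply hρne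
              apply Subtype.ext
              apply Finset.eq_of_subset_of_card_le
              · apply Finset.subset_inter
                · rw [h1.1]; exact Finset.subset_insert _ _
                · rw [h2.1]; exact Finset.subset_insert _ _
              · rw [hicard, ρ.2.2]
            · simp [lM, h2]
          · simp [lM, h1]
        · intro h; exact absurd (Finset.mem_univ _) h
      rw [hsum]
      -- LHS computation
      simp only [Qup, Pup, Matrix.of_apply, if_neg hne, if_pos hc]
      have h1 : 0 < w σ.1 := hpos _ σ.2.1
      have h2 : 0 < w σ'.1 := hpos _ σ'.2.1
      have s1 : (0:ℝ) < Real.sqrt (w σ.1) := Real.sqrt_pos.2 h1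
      have s2 : (0:ℝ) < Real.sqrt (w σ'.1) := Real.sqrt_pos.2 h2
      have e1 : Real.sqrt (w σ.1) * Real.sqrt (w σ.1) = w σ.1 := Real.mul_self_sqrt h1.le
      have hk : ((k:ℝ)+1) ≠ 0 := by positivity
      field_simp
      linear_combination (w (σ.1 ∪ σ'.1)) * e1
    · -- the union is not a face : both sides vanish
      have hLHS : Qup N X w k σ σ' = 0 := by
        simp only [Qup, Pup, Matrix.of_apply, if_neg hne, if_neg hc]
        simp
      rw [hLHS]
      have hsum : ∑ ρ : Face N X (k-1), ∑ i, ∑ j,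
          lM N X w k ρ.1 i σ * linkMat N X w ρ.1 i j * lM N X w k ρ.1 j σ' = 0 := by
        apply Finset.sum_eq_zero; intro ρ _
        apply Finset.sum_eq_zero; intro i _
        apply Finset.sum_eq_zero; intro j _
        by_cases h1 : σ.1 = insert i ρ.1 ∧ i ∉ ρ.1
        · by_cases h2 : σ'.1 = insert j ρ.1 ∧ j ∉ ρ.1
          · have hz : linkMat N X w ρ.1 i j = 0 := by
              simp only [linkMat, Matrix.of_apply]
              rw [if_neg]
              rintro ⟨g1, g2, g3, g4⟩
              apply hc
              have huni : σ.1 ∪ σ'.1 = insert i (insert j ρ.1) := by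
                rw [h1.1, h2.1]
                ext x
                simp only [Finset.mem_union, Finset.mem_insert]
                tauto
              constructor
              · rw [huni]; exact g4
              · rw [huni, Finset.card_insert_of_notMem (by
                    simp only [Finset.mem_insert]
                    rintro (rfl | h) <;> [exact g1 rfl; exact g2 h]),
                  Finset.card_insert_of_notMem g3, ρ.2.2]
                omega
            rw [hz]; ring
          · simp [lM, h2]
        · simp [lM, h1]
      rw [hsum]; ring
end Dom3

section Dom4
variable {N D : ℕ} {X : Finset (Finset (Fin N))} {w : Finset (Fin N) → ℝ}

lemma lM_contract (hdc : ∀ σ ∈ X, ∀ τ ⊆ σ, τ ∈ X)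
    (hbal : ∀ τ ∈ X, τ.card < D → w τ = ∑ σ ∈ X.filter (fun σ => τ ⊆ σ ∧ σ.card = τ.card + 1), w σ)
    {k : ℕ} (hk1 : 1 ≤ k) (hkd : k < D) (ρ : Face N X (k-1)) (σ : Face N X k) :
    ∑ i, lM N X w k ρ.1 i σ * (∑ j, linkMat N X w ρ.1 i j)
      = if ρ.1 ⊆ σ.1 then Real.sqrt (w σ.1) else 0 := by
  by_cases hsub : ρ.1 ⊆ σ.1
  · obtain ⟨i₁, hi₁ρ, hi₁⟩ := unique_elt hsub (by rw [σ.2.2, ρ.2.2]; omega)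
    rw [if_pos hsub, Finset.sum_eq_single i₁]
    · have e1 : lM N X w k ρ.1 i₁ σ = 1 / Real.sqrt (w σ.1) := by
        rw [lM, if_pos ⟨hi₁, hi₁ρ⟩]
      have hmem : insert i₁ ρ.1 ∈ X := hi₁ ▸ σ.2.1
      have e2 : ∑ j, linkMat N X w ρ.1 i₁ j = w σ.1 := by
        rw [link_row_sum (D := D) hdc hbal hi₁ρ hmem
          (by rw [Finset.card_insert_of_notMem hi₁ρ, ρ.2.2]; omega), ← hi₁]
      rw [e1, e2]
      rw [one_div, inv_mul_eq_div, Real.div_sqrt]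
    · intro i _ hine
      have : lM N X w k ρ.1 i σ = 0 := by
        rw [lM, if_neg]
        rintro ⟨h1, h2⟩
        exact hine (insert_eq_insert h2 (h1.symm.trans hi₁))
      simp [this]
    · intro h; exact absurd (Finset.mem_univ _) h
  · rw [if_neg hsub]
    apply Finset.sum_eq_zero; intro i _
    have : lM N X w k ρ.1 i σ = 0 := by
      rw [lM, if_neg]
      rintro ⟨h1, h2⟩
      exact hsub (by rw [h1]; exact Finset.subset_insert _ _)
    simp [this]

lemma face_card (k : ℕ) :
    Fintype.card (Face N X k) = (X.filter fun τ => τ.card = k).card := by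
  rw [Fintype.card_subtype]
  congr 1
  ext τ
  simp [Finset.mem_filter]

end Dom4

section Dom5
variable {N D : ℕ} {X : Finset (Finset (Fin N))} {w : Finset (Fin N) → ℝ}

lemma vtv_entry (hpos : ∀ τ ∈ X, 0 < w τ) (hdc : ∀ σ ∈ X, ∀ τ ⊆ σ, τ ∈ X)
    (hbal : ∀ τ ∈ X, τ.card < D → w τ = ∑ σ ∈ X.filter (fun σ => τ ⊆ σ ∧ σ.card = τ.card + 1), w σ)
    {k : ℕ} (hk1 : 1 ≤ k) (hkd : k < D) (ρ ρ' : Face N X (k-1)) :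
    ∑ σ : Face N X k, Vmat N X w k σ ρ * Vmat N X w k σ ρ'
      = (k:ℝ) * Qup N X w (k-1) ρ ρ' := by
  have hcast : ((k-1 : ℕ) : ℝ) + 1 = (k:ℝ) := by
    have : (k - 1 : ℕ) + 1 = k := by omega
    rw [← this]; push_cast; ring
  have hρpos : 0 < w ρ.1 := hpos _ ρ.2.1
  have hρ'pos : 0 < w ρ'.1 := hpos _ ρ'.2.1
  have sρ : (0:ℝ) < Real.sqrt (w ρ.1) := Real.sqrt_pos.2 hρpos
  have sρ' : (0:ℝ) < Real.sqrt (w ρ'.1) := Real.sqrt_pos.2 hρ'pos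
  have eρ : Real.sqrt (w ρ.1) * Real.sqrt (w ρ.1) = w ρ.1 := Real.mul_self_sqrt hρpos.le
  rcases eq_or_ne ρ ρ' with rfl | hne
  · -- diagonal
    have hLHS : ∑ σ : Face N X k, Vmat N X w k σ ρ * Vmat N X w k σ ρ
        = (∑ σ ∈ X.filter (fun σ => ρ.1 ⊆ σ ∧ σ.card = ρ.1.card + 1), w σ) / w ρ.1 := by
      have h1 : ∀ σ : Face N X k, Vmat N X w k σ ρ * Vmat N X w k σ ρ
          = (if ρ.1 ⊆ σ.1 then w σ.1 else 0) / w ρ.1 := by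
        intro σ
        simp only [Vmat, Matrix.of_apply]
        by_cases hsub : ρ.1 ⊆ σ.1
        · rw [if_pos hsub, if_pos hsub]
          have hσpos : 0 < w σ.1 := hpos _ σ.2.1
          have eσ : Real.sqrt (w σ.1) * Real.sqrt (w σ.1) = w σ.1 := Real.mul_self_sqrt hσpos.le
          rw [div_mul_div_comm, eσ, eρ]
        · rw [if_neg hsub, if_neg hsub, mul_zero, zero_div]
      rw [Finset.sum_congr rfl (fun σ _ => h1 σ), ← Finset.sum_div]
      congr 1
      rw [← Finset.sum_subtype (X.filter (fun τ => τ ∈ X ∧ τ.card = k))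
        (p := fun τ => τ ∈ X ∧ τ.card = k) (by intro τ; simp [Finset.mem_filter])
        (f := fun τ => if ρ.1 ⊆ τ then w τ else 0)]
      rw [Finset.sum_ite, Finset.sum_const_zero, add_zero]
      apply Finset.sum_congr _ (fun _ _ => rfl)
      ext τ
      simp only [Finset.mem_filter, ρ.2.2]
      constructor
      · rintro ⟨⟨h1, h2, h3⟩, h4⟩; exact ⟨h1, h4, by omega⟩
      · rintro ⟨h1, h2, h3⟩; exact ⟨⟨h1, h1, by omega⟩, h2⟩
    rw [hLHS, ← hbal _ ρ.2.1 (by rw [ρ.2.2]; omega)]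
    have hRHS : Qup N X w (k-1) ρ ρ = 1 / (k:ℝ) := by
      have hP : Pup N X w (k-1) ρ ρ = 1 / (k:ℝ) := by
        simp [Pup, hcast]
      simp only [Qup, Matrix.of_apply, hP]
      rw [mul_comm, mul_div_assoc, div_self (ne_of_gt sρ), mul_one]
    rw [hRHS, div_self (ne_of_gt hρpos)]
    have hk0 : (k:ℝ) ≠ 0 := by positivity
    field_simp
  · -- off-diagonal
    have hne1 : ρ.1 ≠ ρ'.1 := fun h => hne (Subtype.ext h)
    have hQ : (k:ℝ) * Qup N X w (k-1) ρ ρ'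
        = if ρ.1 ∪ ρ'.1 ∈ X ∧ (ρ.1 ∪ ρ'.1).card = k then
            w (ρ.1 ∪ ρ'.1) / (Real.sqrt (w ρ.1) * Real.sqrt (w ρ'.1)) else 0 := by
      simp only [Qup, Pup, Matrix.of_apply, if_neg hne, hcast]
      have hkk : k - 1 + 1 = k := by omega
      rw [hkk]
      by_cases hcond : ρ.1 ∪ ρ'.1 ∈ X ∧ (ρ.1 ∪ ρ'.1).card = k
      · rw [if_pos hcond, if_pos hcond]
        have hk0 : (k:ℝ) ≠ 0 := by positivity
        field_simp
        linear_combination (w (ρ.1 ∪ ρ'.1)) * eρ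
      · rw [if_neg hcond, if_neg hcond]
        simp
    rw [hQ]
    have hterm : ∀ σ : Face N X k, Vmat N X w k σ ρ * Vmat N X w k σ ρ'
        = if ρ.1 ∪ ρ'.1 ⊆ σ.1 then w σ.1 / (Real.sqrt (w ρ.1) * Real.sqrt (w ρ'.1)) else 0 := by
      intro σ
      simp only [Vmat, Matrix.of_apply]
      by_cases h1 : ρ.1 ⊆ σ.1
      · by_cases h2 : ρ'.1 ⊆ σ.1
        · rw [if_pos h1, if_pos h2, if_pos (Finset.union_subset h1 h2)]
          have hσpos : 0 < w σ.1 := hpos _ σ.2.1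
          have eσ : Real.sqrt (w σ.1) * Real.sqrt (w σ.1) = w σ.1 := Real.mul_self_sqrt hσpos.le
          rw [div_mul_div_comm, eσ]
        · rw [if_neg h2, mul_zero,
            if_neg (fun h : ρ.1 ∪ ρ'.1 ⊆ σ.1 => h2 (fun a ha => h (Finset.mem_union_right _ ha)))]
      · rw [if_neg h1, zero_mul,
          if_neg (fun h : ρ.1 ∪ ρ'.1 ⊆ σ.1 => h1 (fun a ha => h (Finset.mem_union_left _ ha)))]
    rw [Finset.sum_congr rfl (fun σ _ => hterm σ)]
    by_cases hcond : ρ.1 ∪ ρ'.1 ∈ X ∧ (ρ.1 ∪ ρ'.1).card = k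
    · rw [if_pos hcond]
      set σ₀ : Face N X k := ⟨ρ.1 ∪ ρ'.1, hcond.1, hcond.2⟩ with hσ₀
      rw [Finset.sum_eq_single σ₀]
      · rw [if_pos (show ρ.1 ∪ ρ'.1 ⊆ σ₀.1 from Finset.Subset.refl _)]
      · intro σ _ hσne
        rw [if_neg]
        intro hsub
        apply hσne
        apply Subtype.ext
        exact (Finset.eq_of_subset_of_card_le hsub (by rw [σ.2.2, hcond.2])).symm
      · intro h; exact absurd (Finset.mem_univ _) h
    · rw [if_neg hcond]
      apply Finset.sum_eq_zero; intro σ _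
      rw [if_neg]
      intro hsub
      apply hcond
      have hcard : (ρ.1 ∪ ρ'.1).card = k := by
        have hle : (ρ.1 ∪ ρ'.1).card ≤ k := by
          have := Finset.card_le_card hsub; rwa [σ.2.2] at this
        have hge : k ≤ (ρ.1 ∪ ρ'.1).card := by
          by_contra hlt
          push_neg at hlt
          have h1 : ρ.1 ⊆ ρ.1 ∪ ρ'.1 := fun a ha => Finset.mem_union_left _ ha
          have h2 : ρ'.1 ⊆ ρ.1 ∪ ρ'.1 := fun a ha => Finset.mem_union_right _ ha
          have h3 := Finset.card_le_card h1
          have e1 : ρ.1 = ρ.1 ∪ ρ'.1 :=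
            Finset.eq_of_subset_of_card_le h1 (by rw [ρ.2.2]; omega)
          have e2 : ρ'.1 = ρ.1 ∪ ρ'.1 :=
            Finset.eq_of_subset_of_card_le h2 (by rw [ρ'.2.2]; omega)
          exact hne1 (e1.trans e2.symm)
        omega
      exact ⟨hdc _ σ.2.1 _ hsub, hcard⟩
end Dom5

section Dom6
variable {N D : ℕ} {X : Finset (Finset (Fin N))} {w : Finset (Fin N) → ℝ}

lemma sum4_comm {α β : Type*} [Fintype α] [Fintype β] (F : α → α → β → β → ℝ) :
    ∑ a : α, ∑ b : α, ∑ c : β, ∑ e : β, F a b c e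
      = ∑ c : β, ∑ e : β, ∑ a : α, ∑ b : α, F a b c e := by
  calc ∑ a : α, ∑ b : α, ∑ c : β, ∑ e : β, F a b c e
      = ∑ a : α, ∑ c : β, ∑ b : α, ∑ e : β, F a b c e :=
        Finset.sum_congr rfl (fun a _ => Finset.sum_comm)
    _ = ∑ c : β, ∑ a : α, ∑ b : α, ∑ e : β, F a b c e := Finset.sum_comm
    _ = ∑ c : β, ∑ a : α, ∑ e : β, ∑ b : α, F a b c e :=
        Finset.sum_congr rfl (fun c _ => Finset.sum_congr rfl (fun a _ => Finset.sum_comm))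
    _ = ∑ c : β, ∑ e : β, ∑ a : α, ∑ b : α, F a b c e :=
        Finset.sum_congr rfl (fun c _ => Finset.sum_comm)

lemma h2_form (hpos : ∀ τ ∈ X, 0 < w τ) (hdc : ∀ σ ∈ X, ∀ τ ⊆ σ, τ ∈ X)
    (hbal : ∀ τ ∈ X, τ.card < D → w τ = ∑ σ ∈ X.filter (fun σ => τ ⊆ σ ∧ σ.card = τ.card + 1), w σ)
    {k : ℕ} (hk1 : 1 ≤ k) (hkd : k < D) (y : Face N X (k-1) → ℝ) :
    (Vmat N X w k *ᵥ y) ⬝ᵥ (Vmat N X w k *ᵥ y)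
      = (k:ℝ) * (y ⬝ᵥ (Qup N X w (k-1) *ᵥ y)) := by
  have hL : (Vmat N X w k *ᵥ y) ⬝ᵥ (Vmat N X w k *ᵥ y)
      = ∑ σ : Face N X k, ∑ ρ : Face N X (k-1), ∑ ρ' : Face N X (k-1),
          (Vmat N X w k σ ρ * y ρ) * (Vmat N X w k σ ρ' * y ρ') := by
    simp only [dotProduct, Matrix.mulVec]
    apply Finset.sum_congr rfl; intro σ _
    rw [Finset.sum_mul_sum]
  rw [hL]
  have hswap : ∑ σ : Face N X k, ∑ ρ : Face N X (k-1), ∑ ρ' : Face N X (k-1),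
      (Vmat N X w k σ ρ * y ρ) * (Vmat N X w k σ ρ' * y ρ')
      = ∑ ρ : Face N X (k-1), ∑ ρ' : Face N X (k-1),
          y ρ * y ρ' * ∑ σ : Face N X k, Vmat N X w k σ ρ * Vmat N X w k σ ρ' := by
    rw [Finset.sum_comm]
    apply Finset.sum_congr rfl; intro ρ _
    rw [Finset.sum_comm]
    apply Finset.sum_congr rfl; intro ρ' _
    rw [Finset.mul_sum]
    apply Finset.sum_congr rfl; intro σ _
    ring
  rw [hswap]
  have hR : (k:ℝ) * (y ⬝ᵥ (Qup N X w (k-1) *ᵥ y))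
      = ∑ ρ : Face N X (k-1), ∑ ρ' : Face N X (k-1),
          y ρ * y ρ' * ((k:ℝ) * Qup N X w (k-1) ρ ρ') := by
    simp only [dotProduct, Matrix.mulVec]
    rw [Finset.mul_sum]
    apply Finset.sum_congr rfl; intro ρ _
    rw [Finset.mul_sum, Finset.mul_sum]
    apply Finset.sum_congr rfl; intro ρ' _
    ring
  rw [hR]
  apply Finset.sum_congr rfl; intro ρ _
  apply Finset.sum_congr rfl; intro ρ' _
  rw [vtv_entry hpos hdc hbal hk1 hkd]
end Dom6

section Dom7
variable {N D : ℕ} {X : Finset (Finset (Fin N))} {w : Finset (Fin N) → ℝ}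


lemma psd_form (hpos : ∀ τ ∈ X, 0 < w τ) (hdc : ∀ σ ∈ X, ∀ τ ⊆ σ, τ ∈ X)
    (hbal : ∀ τ ∈ X, τ.card < D → w τ = ∑ σ ∈ X.filter (fun σ => τ ⊆ σ ∧ σ.card = τ.card + 1), w σ)
    (hlse : ∀ τ ∈ X, τ.card ≤ D - 2 → ∀ hA : (linkMat N X w τ).IsHermitian,
      (Finset.univ.filter fun i => 0 < hA.eigenvalues i).card ≤ 1)
    {k : ℕ} (hk1 : 1 ≤ k) (hkd : k < D) (ρ : Face N X (k-1)) (v : Fin N → ℝ) :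
    (v ⬝ᵥ (linkMat N X w ρ.1 *ᵥ v)) * w ρ.1 ≤ (v ⬝ᵥ (linkMat N X w ρ.1 *ᵥ 1)) ^ 2 := by
  have hA := link_herm (X := X) (w := w) ρ.1
  have hcount := hlse ρ.1 ρ.2.1 (by rw [ρ.2.2]; omega) hA
  have htot := link_total (D := D) hdc hbal ρ.2.1 (by rw [ρ.2.2]; omega) (by rw [ρ.2.2]; omega)
  have hy : 0 < (1 : Fin N → ℝ) ⬝ᵥ (linkMat N X w ρ.1 *ᵥ 1) := by
    rw [htot]; exact hpos _ ρ.2.1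
  have h := SpecCount.reverse_cs hA hcount 1 hy v
  rwa [htot] at h

lemma garland_ineq (hpos : ∀ τ ∈ X, 0 < w τ) (hdc : ∀ σ ∈ X, ∀ τ ⊆ σ, τ ∈ X)
    (hbal : ∀ τ ∈ X, τ.card < D → w τ = ∑ σ ∈ X.filter (fun σ => τ ⊆ σ ∧ σ.card = τ.card + 1), w σ)
    (hlse : ∀ τ ∈ X, τ.card ≤ D - 2 → ∀ hA : (linkMat N X w τ).IsHermitian,
      (Finset.univ.filter fun i => 0 < hA.eigenvalues i).card ≤ 1)
    {k : ℕ} (hk1 : 1 ≤ k) (hkd : k < D) (x : Face N X k → ℝ) :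
    ((k:ℝ)+1) * (x ⬝ᵥ (Qup N X w k *ᵥ x))
      ≤ x ⬝ᵥ x + ((Vmat N X w k)ᵀ *ᵥ x) ⬝ᵥ ((Vmat N X w k)ᵀ *ᵥ x) := by
  classical
  set A := fun ρ : Face N X (k-1) => linkMat N X w ρ.1 with hA
  set mv : Face N X (k-1) → Fin N → ℝ :=
    fun ρ i => ∑ σ : Face N X k, lM N X w k ρ.1 i σ * x σ with hmv
  set z : Face N X (k-1) → ℝ := fun ρ => ((Vmat N X w k)ᵀ *ᵥ x) ρ with hz
  -- step A : expansion & Garland identity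
  have expand : ((k:ℝ)+1) * (x ⬝ᵥ (Qup N X w k *ᵥ x))
      = ∑ σ : Face N X k, ∑ σ' : Face N X k,
          x σ * x σ' * (((k:ℝ)+1) * Qup N X w k σ σ') := by
    simp only [dotProduct, Matrix.mulVec]
    rw [Finset.mul_sum]
    apply Finset.sum_congr rfl; intro σ _
    rw [Finset.mul_sum, Finset.mul_sum]
    apply Finset.sum_congr rfl; intro σ' _
    ring
  have step1 : ((k:ℝ)+1) * (x ⬝ᵥ (Qup N X w k *ᵥ x))
      = x ⬝ᵥ x + ∑ ρ : Face N X (k-1), (mv ρ) ⬝ᵥ (A ρ *ᵥ (mv ρ)) := by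
    rw [expand]
    have e1 : ∀ σ σ' : Face N X k, x σ * x σ' * (((k:ℝ)+1) * Qup N X w k σ σ')
        = (if σ = σ' then x σ * x σ' else 0)
          + ∑ ρ : Face N X (k-1), ∑ i, ∑ j,
              x σ * x σ' * (lM N X w k ρ.1 i σ * linkMat N X w ρ.1 i j * lM N X w k ρ.1 j σ') := by
      intro σ σ'
      rw [garland_entry hpos hdc hk1 σ σ', mul_add]
      congr 1
      · rcases eq_or_ne σ σ' with rfl | hne
        · simp
        · simp [hne]
      · rw [Finset.mul_sum]
        apply Finset.sum_congr rfl; intro ρ _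
        rw [Finset.mul_sum]
        apply Finset.sum_congr rfl; intro i _
        rw [Finset.mul_sum]
    rw [Finset.sum_congr rfl (fun σ _ => Finset.sum_congr rfl (fun σ' _ => e1 σ σ'))]
    rw [Finset.sum_congr rfl (fun σ _ => Finset.sum_add_distrib), Finset.sum_add_distrib]
    congr 1
    · -- diagonal part
      have : ∀ σ : Face N X k, ∑ σ' : Face N X k, (if σ = σ' then x σ * x σ' else 0)
          = x σ * x σ := by
        intro σ
        rw [Finset.sum_ite_eq]
        simp
      rw [Finset.sum_congr rfl (fun σ _ => this σ)]
      simp [dotProduct]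
    · -- off-diagonal part
      have e2 : ∀ ρ : Face N X (k-1), (mv ρ) ⬝ᵥ (A ρ *ᵥ (mv ρ))
          = ∑ i, ∑ j, ∑ σ : Face N X k, ∑ σ' : Face N X k,
              x σ * x σ' * (lM N X w k ρ.1 i σ * linkMat N X w ρ.1 i j * lM N X w k ρ.1 j σ') := by
        intro ρ
        simp only [dotProduct, Matrix.mulVec, hmv]
        apply Finset.sum_congr rfl; intro i _
        rw [Finset.sum_mul_sum, Finset.sum_comm]
        apply Finset.sum_congr rfl; intro j _
        apply Finset.sum_congr rfl; intro σ _
        rw [Finset.mul_sum, Finset.mul_sum]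
        apply Finset.sum_congr rfl; intro σ' _
        ring
      have hmove : ∑ σ : Face N X k, ∑ σ' : Face N X k, ∑ ρ : Face N X (k-1), ∑ i, ∑ j,
          x σ * x σ' * (lM N X w k ρ.1 i σ * linkMat N X w ρ.1 i j * lM N X w k ρ.1 j σ')
          = ∑ ρ : Face N X (k-1), ∑ i, ∑ j, ∑ σ : Face N X k, ∑ σ' : Face N X k,
            x σ * x σ' * (lM N X w k ρ.1 i σ * linkMat N X w ρ.1 i j * lM N X w k ρ.1 j σ') := by
        calc ∑ σ : Face N X k, ∑ σ' : Face N X k, ∑ ρ : Face N X (k-1), ∑ i, ∑ j,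
            x σ * x σ' * (lM N X w k ρ.1 i σ * linkMat N X w ρ.1 i j * lM N X w k ρ.1 j σ')
            = ∑ σ : Face N X k, ∑ ρ : Face N X (k-1), ∑ σ' : Face N X k, ∑ i, ∑ j,
              x σ * x σ' * (lM N X w k ρ.1 i σ * linkMat N X w ρ.1 i j * lM N X w k ρ.1 j σ') :=
            Finset.sum_congr rfl (fun σ _ => Finset.sum_comm)
          _ = ∑ ρ : Face N X (k-1), ∑ σ : Face N X k, ∑ σ' : Face N X k, ∑ i, ∑ j,
              x σ * x σ' * (lM N X w k ρ.1 i σ * linkMat N X w ρ.1 i j * lM N X w k ρ.1 j σ') :=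
            Finset.sum_comm
          _ = ∑ ρ : Face N X (k-1), ∑ i, ∑ j, ∑ σ : Face N X k, ∑ σ' : Face N X k,
              x σ * x σ' * (lM N X w k ρ.1 i σ * linkMat N X w ρ.1 i j * lM N X w k ρ.1 j σ') :=
            Finset.sum_congr rfl (fun ρ _ => sum4_comm _)
      rw [hmove]
      exact Finset.sum_congr rfl (fun ρ _ => (e2 ρ).symm)
  rw [step1]
  have per : ∀ ρ : Face N X (k-1), (mv ρ) ⬝ᵥ (A ρ *ᵥ (mv ρ)) ≤ z ρ ^ 2 := by
    intro ρ
    have hwpos : 0 < w ρ.1 := hpos _ ρ.2.1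
    have hsρ : (0:ℝ) < Real.sqrt (w ρ.1) := Real.sqrt_pos.2 hwpos
    have hp := psd_form hpos hdc hbal hlse hk1 hkd ρ (mv ρ)
    have hC2 : (mv ρ) ⬝ᵥ (linkMat N X w ρ.1 *ᵥ (1 : Fin N → ℝ))
        = Real.sqrt (w ρ.1) * z ρ := by
      have hL : (mv ρ) ⬝ᵥ (linkMat N X w ρ.1 *ᵥ (1 : Fin N → ℝ))
          = ∑ σ : Face N X k, x σ * (∑ i, lM N X w k ρ.1 i σ * (∑ j, linkMat N X w ρ.1 i j)) := by
        simp only [dotProduct, Matrix.mulVec, hmv, Pi.one_apply, mul_one]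
        rw [Finset.sum_congr rfl (fun i (_ : i ∈ Finset.univ) =>
          Finset.sum_mul Finset.univ (fun σ => lM N X w k ρ.1 i σ * x σ)
            (∑ j, linkMat N X w ρ.1 i j))]
        rw [Finset.sum_comm]
        apply Finset.sum_congr rfl; intro σ _
        rw [Finset.mul_sum]
        apply Finset.sum_congr rfl; intro i _
        ring
      have hVz : Real.sqrt (w ρ.1) * z ρ
          = ∑ σ : Face N X k, x σ * (if ρ.1 ⊆ σ.1 then Real.sqrt (w σ.1) else 0) := by
        simp only [hz, Matrix.mulVec, dotProduct, Matrix.transpose_apply, Finset.mul_sum]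
        apply Finset.sum_congr rfl; intro σ _
        simp only [Vmat, Matrix.of_apply]
        by_cases hsub : ρ.1 ⊆ σ.1
        · rw [if_pos hsub, if_pos hsub]
          field_simp
        · rw [if_neg hsub, if_neg hsub]
          simp
      rw [hL, hVz]
      apply Finset.sum_congr rfl; intro σ _
      rw [lM_contract hdc hbal hk1 hkd ρ σ]
    rw [hC2] at hp
    have hsq : (Real.sqrt (w ρ.1) * z ρ)^2 = (z ρ ^ 2) * w ρ.1 := by
      rw [mul_pow, Real.sq_sqrt hwpos.le]; ring
    rw [hsq] at hp
    exact le_of_mul_le_mul_right hp hwpos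
  calc x ⬝ᵥ x + ∑ ρ : Face N X (k-1), (mv ρ) ⬝ᵥ (A ρ *ᵥ (mv ρ))
      ≤ x ⬝ᵥ x + ∑ ρ : Face N X (k-1), z ρ ^ 2 :=
        add_le_add le_rfl (Finset.sum_le_sum fun ρ _ => per ρ)
    _ = x ⬝ᵥ x + ((Vmat N X w k)ᵀ *ᵥ x) ⬝ᵥ ((Vmat N X w k)ᵀ *ᵥ x) := by
        congr 1
        simp only [dotProduct, hz]
        apply Finset.sum_congr rfl; intro ρ _
        rw [pow_two]
end Dom7


section Final
variable {N D : ℕ} {X : Finset (Finset (Fin N))} {w : Finset (Fin N) → ℝ}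

lemma count_le_face {K : ℕ} (hQ : (Qup N X w K).IsHermitian) (t : ℝ) :
    (Finset.univ.filter fun τ : Face N X K => t < hQ.eigenvalues τ).card
      ≤ (X.filter fun τ => τ.card = K).card := by
  calc (Finset.univ.filter fun τ : Face N X K => t < hQ.eigenvalues τ).card
      ≤ Finset.univ.card := Finset.card_filter_le _ _
    _ = Fintype.card (Face N X K) := Finset.card_univ
    _ = _ := face_card K

lemma aux_count (hpos : ∀ τ ∈ X, 0 < w τ) (hdc : ∀ σ ∈ X, ∀ τ ⊆ σ, τ ∈ X)
    (hbal : ∀ τ ∈ X, τ.card < D → w τ = ∑ σ ∈ X.filter (fun σ => τ ⊆ σ ∧ σ.card = τ.card + 1), w σ)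
    (hlse : ∀ τ ∈ X, τ.card ≤ D - 2 → ∀ hA : (linkMat N X w τ).IsHermitian,
      (Finset.univ.filter fun i => 0 < hA.eigenvalues i).card ≤ 1) :
    ∀ k : ℕ, k < D → ∀ i : ℕ, i ≤ k →
      (Finset.univ.filter fun τ : Face N X k =>
          ((k:ℝ) - (i:ℝ)) / ((k:ℝ) + 1) < (qup_herm hpos k).eigenvalues τ).card
        ≤ (X.filter fun τ => τ.card = i).card := by
  intro k
  induction k with
  | zero =>
    intro _ i hi
    have h0 : i = 0 := Nat.le_zero.mp hi
    subst h0
    exact count_le_face (qup_herm hpos 0) _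
  | succ k ih =>
    intro hkD i hik
    rcases Nat.lt_or_ge i (k+1) with hik' | hik'
    · -- i ≤ k : use the transfer machinery
      have hikk : i ≤ k := by omega
      have hkD' : k < D := by omega
      have hk1 : 1 ≤ k + 1 := by omega
      set t : ℝ := (((k+1:ℕ):ℝ) - (i:ℝ)) / (((k+1:ℕ):ℝ) + 1) with ht
      obtain ⟨W, hGoodW, hrankW⟩ := SpecCount.exists_good (qup_herm hpos (k+1)) t
      have hcast1 : ((k+1:ℕ):ℝ) = (k:ℝ) + 1 := by push_cast; ring
      have hic : (i:ℝ) ≤ (k:ℝ) := by exact_mod_cast hikk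
      have H1' : ∀ x : Face N X (k+1) → ℝ, ((k:ℝ)+2) * (x ⬝ᵥ (Qup N X w (k+1) *ᵥ x))
          ≤ x ⬝ᵥ x + ((Vmat N X w (k+1))ᵀ *ᵥ x) ⬝ᵥ ((Vmat N X w (k+1))ᵀ *ᵥ x) := by
        intro x
        have := garland_ineq hpos hdc hbal hlse hk1 hkD x
        rw [hcast1] at this
        have e : (k:ℝ) + 1 + 1 = (k:ℝ) + 2 := by ring
        rwa [e] at this
      have H2' : ∀ y : Face N X k → ℝ, (Vmat N X w (k+1) *ᵥ y) ⬝ᵥ (Vmat N X w (k+1) *ᵥ y)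
          = ((k:ℝ)+1) * (y ⬝ᵥ (Qup N X w k *ᵥ y)) := by
        intro y
        have := h2_form hpos hdc hbal hk1 hkD y
        rwa [hcast1] at this
      obtain ⟨W', hGoodW', hrankW'⟩ := SpecCount.transfer (Qup N X w (k+1)) (Qup N X w k)
        (Vmat N X w (k+1)) ((k:ℝ)+2) ((k:ℝ)+1) t ((k:ℝ)-(i:ℝ))
        (by positivity) (by positivity) (by linarith)
        (by rw [ht, hcast1]; field_simp; ring) H1' H2' W hGoodW
      have hgl := SpecCount.good_le (qup_herm hpos k) (((k:ℝ)-(i:ℝ)) / ((k:ℝ)+1)) W' hGoodW'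
      have hih := ih hkD' i hikk
      calc (Finset.univ.filter fun τ : Face N X (k+1) =>
            (((k+1:ℕ):ℝ) - (i:ℝ)) / (((k+1:ℕ):ℝ) + 1)
              < (qup_herm hpos (k+1)).eigenvalues τ).card
          = Module.finrank ℝ W := hrankW.symm
        _ = Module.finrank ℝ W' := hrankW'.symm
        _ ≤ (Finset.univ.filter fun τ : Face N X k =>
              ((k:ℝ)-(i:ℝ)) / ((k:ℝ)+1) < (qup_herm hpos k).eigenvalues τ).card := hgl
        _ ≤ (X.filter fun τ => τ.card = i).card := hih
    · -- i = k+1 : trivial bound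
      have h1 : i = k + 1 := by omega
      subst h1
      exact count_le_face (qup_herm hpos (k+1)) _
end Final

theorem stmt2 (n d : ℕ) (X : Finset (Finset (Fin n))) (w : Finset (Fin n) → ℝ)
    (hX : IsPureComplex n X d) (hw : IsBalanced n X d w) (hlse : IsZeroLSE n X d w)
    (k : ℕ) (hk1 : 1 ≤ k) (hkd : k < d) :
    ∃ hQ : (Qup n X w k).IsHermitian,
      (∀ i : ℕ, i ≤ k →
        (Finset.univ.filter fun τ : Face n X k =>
            1 - ((i : ℝ) + 1) / ((k : ℝ) + 1) < hQ.eigenvalues τ).card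
          ≤ (X.filter fun τ => τ.card = i).card) ∧
      (Finset.univ.filter fun τ : Face n X k =>
          (k : ℝ) / ((k : ℝ) + 1) < hQ.eigenvalues τ).card ≤ 1 := by
  obtain ⟨hne, hdc, hpure⟩ := hX
  obtain ⟨hpos, hbal⟩ := hw
  have hlse' : ∀ τ ∈ X, τ.card ≤ d - 2 → ∀ hA : (linkMat n X w τ).IsHermitian,
      (Finset.univ.filter fun i => 0 < hA.eigenvalues i).card ≤ 1 := hlse
  have hk0 : ((k:ℝ) + 1) ≠ 0 := by positivity
  refine ⟨qup_herm hpos k, ?_, ?_⟩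
  · intro i hik
    have hthr : 1 - ((i : ℝ) + 1) / ((k : ℝ) + 1) = ((k:ℝ) - (i:ℝ)) / ((k:ℝ) + 1) := by
      field_simp
      ring
    rw [hthr]
    exact aux_count hpos hdc hbal hlse' k hkd i hik
  · have h0 := aux_count hpos hdc hbal hlse' k hkd 0 (by omega)
    have hthr : ((k:ℝ) - ((0:ℕ):ℝ)) / ((k:ℝ) + 1) = (k:ℝ) / ((k:ℝ) + 1) := by
      norm_num
    rw [hthr] at h0
    refine le_trans h0 ?_
    have hsub : (X.filter fun τ => τ.card = 0) ⊆ {∅} := by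
      intro τ hτ
      simp only [Finset.mem_filter] at hτ
      simp [Finset.card_eq_zero.mp hτ.2]
    calc (X.filter fun τ => τ.card = 0).card ≤ ({∅} : Finset (Finset (Fin n))).card :=
          Finset.card_le_card hsub
      _ = 1 := Finset.card_singleton _

end
end

section
/- Let (X,w) be a pure d-dimensional simplicial complex on {1,…,n} with a balanced weight function, and suppose (X,w) is a 0-local spectral expander. Then for every 1 ≤ k < d, the symmetric matrix D_k·((k/(k+1))·P_k^∨ + (1/(k+1))·I − P_k^∧) is positive semidefinite, where D_k is the diagonal matrix indexed by X(k) with entries w(τ). Equivalently, P_k^∧ ≼ (k/(k+1))·P_k^∨ + (1/(k+1))·I with respect to the inner product ⟨φ,ψ⟩ = Σ_{τ∈X(k)} w(τ)φ(τ)ψ(τ). -/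
open Matrix Finset
open scoped Classical

noncomputable section

variable (n : ℕ)

lemma revCS {ι : Type*} [Fintype ι] (lam a b : ι → ℝ)
    (hone : (Finset.univ.filter fun i => 0 < lam i).card ≤ 1)
    (hC : 0 < ∑ i, lam i * b i * b i) :
    (∑ i, lam i * a i * a i) * (∑ i, lam i * b i * b i) ≤ (∑ i, lam i * a i * b i)^2 := by
  have h1 : ∃ i0, 0 < lam i0 * b i0 * b i0 := by
    by_contra h; push_neg at h
    exact absurd (Finset.sum_nonpos fun i _ => h i) (not_le.2 hC)
  obtain ⟨i0, hi0⟩ := h1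
  have hlam0 : 0 < lam i0 := by nlinarith [sq_nonneg (b i0)]
  have hb0 : b i0 ≠ 0 := by intro h; rw [h] at hi0; simp at hi0
  have hneg : ∀ i, i ≠ i0 → lam i ≤ 0 := by
    intro i hi
    by_contra h; push_neg at h
    have hsub : ({i, i0} : Finset ι) ⊆ Finset.univ.filter fun j => 0 < lam j := by
      intro x hx
      simp only [Finset.mem_insert, Finset.mem_singleton] at hx
      rcases hx with rfl | rfl <;> simp [h, hlam0]
    have hcard := Finset.card_le_card hsub
    rw [Finset.card_insert_of_notMem (by simp [hi]), Finset.card_singleton] at hcard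
    omega
  set t := -(a i0) / b i0 with ht
  set A := ∑ i, lam i * a i * a i with hA
  set B := ∑ i, lam i * a i * b i with hB
  set C := ∑ i, lam i * b i * b i with hCdef
  have hq : ∑ i, lam i * (a i + t * b i)^2 ≤ 0 := by
    apply Finset.sum_nonpos
    intro i _
    rcases eq_or_ne i i0 with rfl | h
    · have : a i + t * b i = 0 := by simp [ht, hb0]
      rw [this]; simp
    · nlinarith [sq_nonneg (a i + t * b i), hneg i h]
  have hexp : ∑ i, lam i * (a i + t * b i)^2 = A + 2*t*B + t^2 * C := by
    rw [hA, hB, hCdef, Finset.mul_sum, Finset.mul_sum, ← Finset.sum_add_distrib,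
      ← Finset.sum_add_distrib]
    exact Finset.sum_congr rfl fun i _ => by ring
  rw [hexp] at hq
  nlinarith [sq_nonneg (B + t*C), mul_le_mul_of_nonneg_right hq hC.le]

lemma quadform_bound {m : ℕ} (A : Matrix (Fin m) (Fin m) ℝ) (hA : A.IsHermitian)
    (hone : (Finset.univ.filter fun i => 0 < hA.eigenvalues i).card ≤ 1)
    (u y : Fin m → ℝ) (hu : 0 < u ⬝ᵥ A *ᵥ u) :
    (y ⬝ᵥ A *ᵥ y) * (u ⬝ᵥ A *ᵥ u) ≤ (y ⬝ᵥ A *ᵥ u)^2 := by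
  set U : Matrix (Fin m) (Fin m) ℝ := (hA.eigenvectorUnitary : Matrix (Fin m) (Fin m) ℝ) with hU
  have key : ∀ v v' : Fin m → ℝ, v ⬝ᵥ A *ᵥ v' =
      ∑ i, hA.eigenvalues i * ((star U *ᵥ v) i) * ((star U *ᵥ v') i) := by
    intro v v'
    conv_lhs => rw [hA.spectral_theorem, Unitary.conjStarAlgAut_apply]
    rw [← mulVec_mulVec, ← mulVec_mulVec, dotProduct_mulVec]
    have hsU : star U = Uᵀ := by
      ext i j; simp [star, conjTranspose_apply]
    have h1 : v ᵥ* U = star U *ᵥ v := by rw [hsU, ← vecMul_transpose, transpose_transpose]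
    rw [h1]
    simp only [dotProduct, mulVec_diagonal, Function.comp, RCLike.ofReal_real_eq_id, id]
    exact Finset.sum_congr rfl fun i _ => by ring
  rw [key y y, key u u, key y u] at *
  exact revCS _ _ _ hone hu
lemma exists_insert_eq {α : Type*} [DecidableEq α] {σ ρ : Finset α} (hsub : ρ ⊆ σ)
    (hc : σ.card = ρ.card + 1) : ∃ i, i ∉ ρ ∧ σ = insert i ρ := by
  have h1 : (σ \ ρ).card = 1 := by rw [Finset.card_sdiff_of_subset hsub, hc]; omega
  obtain ⟨i, hi⟩ := Finset.card_eq_one.mp h1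
  have hiρ : i ∈ σ \ ρ := hi ▸ Finset.mem_singleton_self i
  refine ⟨i, (Finset.mem_sdiff.mp hiρ).2, ?_⟩
  have h2 := Finset.union_sdiff_of_subset hsub
  rw [hi] at h2
  rw [← h2]; ext x; simp [or_comm]

lemma insert_inj' {α : Type*} [DecidableEq α] {i j : α} {ρ : Finset α}
    (hi : i ∉ ρ) (hj : j ∉ ρ) (h : insert i ρ = insert j ρ) : i = j := by
  have : i ∈ insert j ρ := h ▸ Finset.mem_insert_self i ρ
  rcases Finset.mem_insert.mp this with h1 | h1
  · exact h1
  · exact absurd h1 hi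

lemma coface_sum (X : Finset (Finset (Fin n))) (ρ : Finset (Fin n))
    (f : Finset (Fin n) → ℝ) :
    ∑ σ ∈ X.filter (fun σ => ρ ⊆ σ ∧ σ.card = ρ.card + 1), f σ
      = ∑ i ∈ Finset.univ.filter (fun i => i ∉ ρ ∧ insert i ρ ∈ X), f (insert i ρ) := by
  symm
  apply Finset.sum_bij (fun i _ => insert i ρ)
  · intro i hi
    simp only [Finset.mem_filter, Finset.mem_univ, true_and] at hi ⊢
    exact ⟨hi.2, Finset.subset_insert _ _, by rw [Finset.card_insert_of_notMem hi.1]⟩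
  · intro i hi j hj hij
    simp only [Finset.mem_filter, Finset.mem_univ, true_and] at hi hj
    exact insert_inj' hi.1 hj.1 hij
  · intro σ hσ
    simp only [Finset.mem_filter] at hσ
    obtain ⟨i, hiρ, rfl⟩ := exists_insert_eq hσ.2.1 hσ.2.2
    exact ⟨i, by simp [hiρ, hσ.1], rfl⟩
  · intros; rfl

lemma link_quadform (d : ℕ) (X : Finset (Finset (Fin n))) (w : Finset (Fin n) → ℝ)
    (hX : IsPureComplex n X d) (hw : IsBalanced n X d w) (hlse : IsZeroLSE n X d w)
    (k : ℕ) (hk1 : 1 ≤ k) (hkd : k < d)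
    (τ : Finset (Fin n)) (hτ : τ ∈ X) (hτc : τ.card = k - 1) (y : Fin n → ℝ) :
    w τ * (∑ i, ∑ j, linkMat n X w τ i j * y i * y j) ≤
      (∑ i ∈ Finset.univ.filter (fun i => i ∉ τ ∧ insert i τ ∈ X), w (insert i τ) * y i)^2 := by
  obtain ⟨hXne, hdown, hpure⟩ := hX
  obtain ⟨hpos, hbal⟩ := hw
  have hAh : (linkMat n X w τ).IsHermitian := by
    unfold Matrix.IsHermitian
    ext i j
    simp only [conjTranspose_apply, linkMat, Matrix.of_apply, star_trivial]
    rw [Finset.insert_comm j i]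
    exact if_congr ⟨fun ⟨h1, h2, h3, h4⟩ => ⟨h1.symm, h3, h2, h4⟩,
      fun ⟨h1, h2, h3, h4⟩ => ⟨h1.symm, h3, h2, h4⟩⟩ rfl rfl
  set L := Finset.univ.filter (fun i => i ∉ τ ∧ insert i τ ∈ X) with hL
  have hrow : ∀ i, (∑ j, linkMat n X w τ i j) = if i ∈ L then w (insert i τ) else 0 := by
    intro i
    by_cases hi : i ∈ L
    · rw [if_pos hi]
      rw [hL, Finset.mem_filter] at hi
      obtain ⟨-, hiτ, hiX⟩ := hi
      have hb := hbal (insert i τ) hiX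
        (by rw [Finset.card_insert_of_notMem hiτ, hτc]; omega)
      rw [coface_sum] at hb
      rw [hb, Finset.sum_filter]
      apply Finset.sum_congr rfl
      intro j _
      simp only [linkMat, Matrix.of_apply, Finset.mem_insert]
      rw [Finset.insert_comm i j]
      apply if_congr _ rfl rfl
      constructor
      · rintro ⟨h1, -, h3, h4⟩
        exact ⟨by push_neg; exact ⟨fun h => h1 h.symm, h3⟩, h4⟩
      · rintro ⟨h1, h2⟩
        push_neg at h1
        exact ⟨fun h => h1.1 h.symm, hiτ, h1.2, h2⟩
    · rw [if_neg hi]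
      apply Finset.sum_eq_zero
      intro j _
      simp only [linkMat, Matrix.of_apply, ite_eq_right_iff]
      rintro ⟨h1, h2, h3, h4⟩
      exfalso
      have hins : insert i τ ∈ X :=
        hdown _ h4 _ (Finset.insert_subset_insert _ (Finset.subset_insert _ _))
      exact hi (Finset.mem_filter.mpr ⟨Finset.mem_univ i, h2, hins⟩)
  have hAu : linkMat n X w τ *ᵥ (fun _ => (1 : ℝ)) =
      fun i => if i ∈ L then w (insert i τ) else 0 := by
    funext i
    simp only [Matrix.mulVec, dotProduct, mul_one]
    exact hrow i
  have hcτ : τ.card + 1 = k := by omega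
  have hbτ := hbal τ hτ (by omega)
  rw [coface_sum] at hbτ
  have huAu : (fun _ => (1:ℝ)) ⬝ᵥ linkMat n X w τ *ᵥ (fun _ => (1:ℝ)) = w τ := by
    rw [hAu]
    simp only [dotProduct, one_mul]
    rw [Finset.sum_ite_mem, Finset.univ_inter, hbτ]
  have hyAu : y ⬝ᵥ linkMat n X w τ *ᵥ (fun _ => (1:ℝ)) =
      ∑ i ∈ L, w (insert i τ) * y i := by
    rw [hAu]
    simp only [dotProduct, mul_ite, mul_zero]
    rw [Finset.sum_ite_mem, Finset.univ_inter]
    exact Finset.sum_congr rfl fun i _ => mul_comm _ _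
  have hyAy : y ⬝ᵥ linkMat n X w τ *ᵥ y = ∑ i, ∑ j, linkMat n X w τ i j * y i * y j := by
    simp only [dotProduct, Matrix.mulVec, Finset.mul_sum]
    exact Finset.sum_congr rfl fun i _ => Finset.sum_congr rfl fun j _ => by ring
  have hupos : 0 < (fun _ => (1:ℝ)) ⬝ᵥ linkMat n X w τ *ᵥ (fun _ => (1:ℝ)) := by
    rw [huAu]; exact hpos τ hτ
  have hlse' := hlse τ hτ (by omega) hAh
  have hkey := quadform_bound _ hAh hlse' (fun _ => (1:ℝ)) y hupos
  rw [hyAy, huAu, hyAu] at hkey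
  linarith
lemma Mentry (X : Finset (Finset (Fin n))) (w : Finset (Fin n) → ℝ)
    (hdown : ∀ σ ∈ X, ∀ τ ⊆ σ, τ ∈ X) (hpos : ∀ τ ∈ X, 0 < w τ)
    (k : ℕ) (hk1 : 1 ≤ k) (σ σ' : Face n X k) :
    (Matrix.diagonal (fun τ : Face n X k => w τ.1) *
      (((k : ℝ) / ((k : ℝ) + 1)) • Pdown n X w k +
        (1 / ((k : ℝ) + 1)) • (1 : Matrix (Face n X k) (Face n X k) ℝ)
        - Pup n X w k)) σ σ'
    = if σ = σ' then
        (∑ τ ∈ X.filter (fun τ => τ ⊆ σ.1 ∧ τ.card = k - 1), w σ.1 * w σ.1 / w τ) / ((k:ℝ)+1)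
      else if (σ.1 ∩ σ'.1).card = k - 1 then
        (w σ.1 * w σ'.1 / w (σ.1 ∩ σ'.1)
          - (if σ.1 ∪ σ'.1 ∈ X then w (σ.1 ∪ σ'.1) else 0)) / ((k:ℝ)+1)
      else 0 := by
  have hk0 : (k:ℝ) ≠ 0 := Nat.cast_ne_zero.mpr (by omega)
  have hk1' : (k:ℝ) + 1 ≠ 0 := by positivity
  rw [Matrix.diagonal_mul, Matrix.sub_apply, Matrix.add_apply, Matrix.smul_apply,
    Matrix.smul_apply]
  by_cases hss : σ = σ'
  · subst hss
    rw [if_pos rfl]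
    simp only [Pdown, Pup, Matrix.of_apply, if_pos rfl, if_true, eq_self_iff_true,
      Matrix.one_apply_eq, smul_eq_mul]
    rw [mul_one, add_sub_cancel_right, Finset.mul_sum, Finset.mul_sum, Finset.sum_div]
    apply Finset.sum_congr rfl
    intro τ hτ
    have hwτ : 0 < w τ := hpos τ (Finset.mem_filter.mp hτ).1
    field_simp
  · rw [if_neg hss]
    have hne : σ.1 ≠ σ'.1 := fun h => hss (Subtype.ext h)
    simp only [Pdown, Pup, Matrix.of_apply, if_neg hss, Matrix.one_apply_ne hss,
      smul_eq_mul, mul_zero]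
    have hinterX : σ.1 ∩ σ'.1 ∈ X := hdown σ.1 σ.2.1 _ Finset.inter_subset_left
    have hcards : (σ.1 ∩ σ'.1).card + (σ.1 ∪ σ'.1).card = k + k := by
      rw [Finset.card_inter_add_card_union, σ.2.2, σ'.2.2]
    have hint_lt : (σ.1 ∩ σ'.1).card < k := by
      have h1 : (σ.1 ∩ σ'.1).card ≤ k := by
        calc (σ.1 ∩ σ'.1).card ≤ σ.1.card := Finset.card_le_card Finset.inter_subset_left
          _ = k := σ.2.2
      rcases eq_or_lt_of_le h1 with he | h
      · exfalso
        have h2 : σ.1 ∩ σ'.1 = σ.1 :=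
          Finset.eq_of_subset_of_card_le Finset.inter_subset_left (by rw [σ.2.2, he])
        have h3 : σ.1 ⊆ σ'.1 := by rw [← h2]; exact Finset.inter_subset_right
        exact hne (Finset.eq_of_subset_of_card_le h3 (by rw [σ.2.2, σ'.2.2]))
      · exact h
    by_cases hc : (σ.1 ∩ σ'.1).card = k - 1
    · rw [if_pos hc, if_pos ⟨hinterX, hc⟩]
      have hcu : (σ.1 ∪ σ'.1).card = k + 1 := by omega
      have hwσ : 0 < w σ.1 := hpos _ σ.2.1
      have hwi : 0 < w (σ.1 ∩ σ'.1) := hpos _ hinterX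
      by_cases hu : σ.1 ∪ σ'.1 ∈ X
      · rw [if_pos ⟨hu, hcu⟩, if_pos hu]
        field_simp
        ring
      · rw [if_neg (fun h => hu h.1), if_neg hu]
        field_simp
        ring
    · rw [if_neg hc]
      have hnd : ¬(σ.1 ∩ σ'.1 ∈ X ∧ (σ.1 ∩ σ'.1).card = k - 1) := fun h => hc h.2
      have hnu : ¬(σ.1 ∪ σ'.1 ∈ X ∧ (σ.1 ∪ σ'.1).card = k + 1) := by
        rintro ⟨-, h2⟩
        omega
      rw [if_neg hnd, if_neg hnu]
      ring

lemma Mherm (X : Finset (Finset (Fin n))) (w : Finset (Fin n) → ℝ)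
    (hdown : ∀ σ ∈ X, ∀ τ ⊆ σ, τ ∈ X) (hpos : ∀ τ ∈ X, 0 < w τ)
    (k : ℕ) (hk1 : 1 ≤ k) :
    (Matrix.diagonal (fun τ : Face n X k => w τ.1) *
      (((k : ℝ) / ((k : ℝ) + 1)) • Pdown n X w k +
        (1 / ((k : ℝ) + 1)) • (1 : Matrix (Face n X k) (Face n X k) ℝ)
        - Pup n X w k)).IsHermitian := by
  unfold Matrix.IsHermitian
  ext σ σ'
  rw [Matrix.conjTranspose_apply, star_trivial, Mentry _ X w hdown hpos k hk1 σ σ',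
    Mentry _ X w hdown hpos k hk1 σ' σ]
  by_cases hss : σ = σ'
  · subst hss; rfl
  · rw [if_neg (Ne.symm hss), if_neg hss, Finset.inter_comm σ'.1 σ.1,
      Finset.union_comm σ'.1 σ.1, mul_comm (w σ'.1) (w σ.1)]
lemma face_sum (X : Finset (Finset (Fin n))) (k : ℕ)
    (τ : Finset (Fin n)) (hτc : τ.card + 1 = k) (g : Face n X k → ℝ) :
    ∑ σ ∈ Finset.univ.filter (fun σ : Face n X k => τ ⊆ σ.1), g σ
      = ∑ i ∈ Finset.univ.filter (fun i => i ∉ τ ∧ insert i τ ∈ X),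
          (if h : i ∉ τ ∧ insert i τ ∈ X then
            g ⟨insert i τ, h.2, by rw [Finset.card_insert_of_notMem h.1, hτc]⟩ else 0) := by
  symm
  apply Finset.sum_bij (fun (i : Fin n)
      (hi : i ∈ Finset.univ.filter (fun i => i ∉ τ ∧ insert i τ ∈ X)) =>
    (⟨insert i τ, ((Finset.mem_filter.mp hi).2).2, by
      rw [Finset.card_insert_of_notMem ((Finset.mem_filter.mp hi).2).1, hτc]⟩ : Face n X k))
  · intro i hi
    exact Finset.mem_filter.mpr ⟨Finset.mem_univ _, Finset.subset_insert _ _⟩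
  · intro i hi j hj hij
    have h1 := (Finset.mem_filter.mp hi).2
    have h2 := (Finset.mem_filter.mp hj).2
    exact insert_inj' h1.1 h2.1 (congrArg Subtype.val hij)
  · intro σ hσ
    have hσ' := Finset.mem_filter.mp hσ
    have hcard : σ.1.card = τ.card + 1 := by rw [σ.2.2, hτc]
    obtain ⟨i, hiτ, hins⟩ := exists_insert_eq hσ'.2 hcard
    have hiX : insert i τ ∈ X := hins ▸ σ.2.1
    refine ⟨i, Finset.mem_filter.mpr ⟨Finset.mem_univ _, hiτ, hiX⟩, ?_⟩
    exact Subtype.ext hins.symm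
  · intro i hi
    have h1 := (Finset.mem_filter.mp hi).2
    rw [dif_pos h1]

lemma pair_conv (X : Finset (Finset (Fin n))) (w : Finset (Fin n) → ℝ)
    (hdown : ∀ σ ∈ X, ∀ τ ⊆ σ, τ ∈ X) (k : ℕ)
    (τ : Finset (Fin n)) (hτc : τ.card + 1 = k) (x : Face n X k → ℝ) (y : Fin n → ℝ)
    (hy : ∀ i (h : i ∉ τ ∧ insert i τ ∈ X),
      y i = x ⟨insert i τ, h.2, by rw [Finset.card_insert_of_notMem h.1, hτc]⟩)
    (hy0 : ∀ i, ¬(i ∉ τ ∧ insert i τ ∈ X) → y i = 0) :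
    ∑ σ : Face n X k, ∑ σ' : Face n X k,
        (if (τ ⊆ σ.1 ∧ τ ⊆ σ'.1) ∧ σ ≠ σ' ∧ σ.1 ∪ σ'.1 ∈ X
          then w (σ.1 ∪ σ'.1) * x σ * x σ' else 0)
      = ∑ i, ∑ j, linkMat n X w τ i j * y i * y j := by
  set L := Finset.univ.filter (fun i : Fin n => i ∉ τ ∧ insert i τ ∈ X) with hL
  have hLmem : ∀ i, i ∈ L ↔ (i ∉ τ ∧ insert i τ ∈ X) := by
    intro i; rw [hL, Finset.mem_filter]; simp
  -- restrict RHS to L × L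
  have hR1 : ∑ i, ∑ j, linkMat n X w τ i j * y i * y j
      = ∑ i ∈ L, ∑ j ∈ L, linkMat n X w τ i j * y i * y j := by
    rw [← Finset.sum_subset (Finset.subset_univ L)]
    · apply Finset.sum_congr rfl
      intro i _
      rw [← Finset.sum_subset (Finset.subset_univ L)]
      intro j _ hj
      rw [hy0 j (fun h => hj ((hLmem j).mpr h)), mul_zero]
    · intro i _ hi
      apply Finset.sum_eq_zero
      intro j _
      rw [hy0 i (fun h => hi ((hLmem i).mpr h))]
      ring
  rw [hR1]
  -- restrict LHS to Fτ × Fτ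
  set Fτ := Finset.univ.filter (fun σ : Face n X k => τ ⊆ σ.1) with hFτ
  have hL1 : ∑ σ : Face n X k, ∑ σ' : Face n X k,
        (if (τ ⊆ σ.1 ∧ τ ⊆ σ'.1) ∧ σ ≠ σ' ∧ σ.1 ∪ σ'.1 ∈ X
          then w (σ.1 ∪ σ'.1) * x σ * x σ' else 0)
      = ∑ σ ∈ Fτ, ∑ σ' ∈ Fτ,
          (if σ ≠ σ' ∧ σ.1 ∪ σ'.1 ∈ X then w (σ.1 ∪ σ'.1) * x σ * x σ' else 0) := by
    rw [hFτ, Finset.sum_filter]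
    apply Finset.sum_congr rfl
    intro σ _
    by_cases hτσ : τ ⊆ σ.1
    · rw [if_pos hτσ, Finset.sum_filter]
      apply Finset.sum_congr rfl
      intro σ' _
      by_cases hτσ' : τ ⊆ σ'.1
      · rw [if_pos hτσ']
        apply if_congr _ rfl rfl
        constructor
        · rintro ⟨-, h⟩; exact h
        · intro h; exact ⟨⟨hτσ, hτσ'⟩, h⟩
      · rw [if_neg hτσ', if_neg (fun h => hτσ' h.1.2)]
    · rw [if_neg hτσ]
      apply Finset.sum_eq_zero
      intro σ' _
      rw [if_neg (fun h => hτσ h.1.1)]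
  rw [hL1]
  -- now biject L with Fτ (twice)
  symm
  apply Finset.sum_bij (fun (i : Fin n) (hi : i ∈ L) =>
    (⟨insert i τ, ((hLmem i).mp hi).2, by
      rw [Finset.card_insert_of_notMem ((hLmem i).mp hi).1, hτc]⟩ : Face n X k))
  · intro i hi
    exact Finset.mem_filter.mpr ⟨Finset.mem_univ _, Finset.subset_insert _ _⟩
  · intro i hi j hj hij
    exact insert_inj' ((hLmem i).mp hi).1 ((hLmem j).mp hj).1 (congrArg Subtype.val hij)
  · intro σ hσ
    have hσ' := Finset.mem_filter.mp hσ
    have hcard : σ.1.card = τ.card + 1 := by rw [σ.2.2, hτc]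
    obtain ⟨i, hiτ, hins⟩ := exists_insert_eq hσ'.2 hcard
    have hiX : insert i τ ∈ X := hins ▸ σ.2.1
    exact ⟨i, (hLmem i).mpr ⟨hiτ, hiX⟩, Subtype.ext hins.symm⟩
  · intro i hi
    obtain ⟨hiτ, hiX⟩ := (hLmem i).mp hi
    apply Finset.sum_bij (fun (j : Fin n) (hj : j ∈ L) =>
      (⟨insert j τ, ((hLmem j).mp hj).2, by
        rw [Finset.card_insert_of_notMem ((hLmem j).mp hj).1, hτc]⟩ : Face n X k))
    · intro j hj
      exact Finset.mem_filter.mpr ⟨Finset.mem_univ _, Finset.subset_insert _ _⟩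
    · intro j hj j' hj' hjj'
      exact insert_inj' ((hLmem j).mp hj).1 ((hLmem j').mp hj').1 (congrArg Subtype.val hjj')
    · intro σ hσ
      have hσ' := Finset.mem_filter.mp hσ
      have hcard : σ.1.card = τ.card + 1 := by rw [σ.2.2, hτc]
      obtain ⟨j, hjτ, hins⟩ := exists_insert_eq hσ'.2 hcard
      have hjX : insert j τ ∈ X := hins ▸ σ.2.1
      exact ⟨j, (hLmem j).mpr ⟨hjτ, hjX⟩, Subtype.ext hins.symm⟩
    · intro j hj
      obtain ⟨hjτ, hjX⟩ := (hLmem j).mp hj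
      have hyi : y i = x ⟨insert i τ, hiX, by
          rw [Finset.card_insert_of_notMem hiτ, hτc]⟩ := hy i ⟨hiτ, hiX⟩
      have hyj : y j = x ⟨insert j τ, hjX, by
          rw [Finset.card_insert_of_notMem hjτ, hτc]⟩ := hy j ⟨hjτ, hjX⟩
      have hunion : insert i τ ∪ insert j τ = insert i (insert j τ) := by
        ext a; simp [Finset.mem_insert, Finset.mem_union]; tauto
      have hne_iff : (i ≠ j) ↔
          ((⟨insert i τ, hiX, by rw [Finset.card_insert_of_notMem hiτ, hτc]⟩ : Face n X k)
            ≠ ⟨insert j τ, hjX, by rw [Finset.card_insert_of_notMem hjτ, hτc]⟩) := by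
        constructor
        · intro h hc
          exact h (insert_inj' hiτ hjτ (congrArg Subtype.val hc))
        · intro h hc
          exact h (by subst hc; rfl)
      simp only [linkMat, Matrix.of_apply, hyi, hyj, ite_mul, zero_mul]
      rw [hunion]
      apply if_congr _ rfl rfl
      constructor
      · rintro ⟨h1, -, -, h4⟩
        exact ⟨hne_iff.mp h1, h4⟩
      · rintro ⟨h1, h2⟩
        exact ⟨hne_iff.mpr h1, hiτ, hjτ, h2⟩
set_option maxHeartbeats 2000000 in
theorem stmt3 (n d : ℕ) (X : Finset (Finset (Fin n))) (w : Finset (Fin n) → ℝ)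
    (hX : IsPureComplex n X d) (hw : IsBalanced n X d w) (hlse : IsZeroLSE n X d w)
    (k : ℕ) (hk1 : 1 ≤ k) (hkd : k < d) :
    (Matrix.diagonal (fun τ : Face n X k => w τ.1) *
      (((k : ℝ) / ((k : ℝ) + 1)) • Pdown n X w k + (1 / ((k : ℝ) + 1)) • (1 : Matrix (Face n X k) (Face n X k) ℝ)
        - Pup n X w k)).PosSemidef := by
  have hdown := hX.2.1
  have hpos := hw.1
  have hkR : ((k:ℝ)+1) ≠ 0 := by positivity
  have hkRpos : (0:ℝ) < (k:ℝ)+1 := by positivity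
  set M := (Matrix.diagonal (fun τ : Face n X k => w τ.1) *
      (((k : ℝ) / ((k : ℝ) + 1)) • Pdown n X w k +
        (1 / ((k : ℝ) + 1)) • (1 : Matrix (Face n X k) (Face n X k) ℝ)
        - Pup n X w k)) with hMdef
  rw [posSemidef_iff_dotProduct_mulVec]
  constructor
  · rw [hMdef]; exact Mherm _ X w hdown hpos k hk1
  intro x
  have hsx : star x = x := funext fun i => star_trivial _
  rw [hsx]
  set T := X.filter (fun τ => τ.card = k - 1) with hT
  have key : ∀ σ σ' : Face n X k,
      (∑ τ ∈ T, ((if τ ⊆ σ.1 ∧ τ ⊆ σ'.1 then w σ.1 * x σ * (w σ'.1 * x σ') / w τ else 0)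
        - (if (τ ⊆ σ.1 ∧ τ ⊆ σ'.1) ∧ σ ≠ σ' ∧ σ.1 ∪ σ'.1 ∈ X
            then w (σ.1 ∪ σ'.1) * x σ * x σ' else 0)))
      = ((k:ℝ)+1) * (x σ * (M σ σ' * x σ')) := by
    intro σ σ'
    rw [Finset.sum_sub_distrib, hMdef, Mentry _ X w hdown hpos k hk1 σ σ']
    by_cases hss : σ = σ'
    · subst hss
      rw [if_pos rfl]
      have h2 : (∑ τ ∈ T, (if (τ ⊆ σ.1 ∧ τ ⊆ σ.1) ∧ σ ≠ σ ∧ σ.1 ∪ σ.1 ∈ X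
          then w (σ.1 ∪ σ.1) * x σ * x σ else 0)) = 0 :=
        Finset.sum_eq_zero fun τ _ => by simp
      rw [h2, sub_zero]
      have h1 : (∑ τ ∈ T, (if τ ⊆ σ.1 ∧ τ ⊆ σ.1 then w σ.1 * x σ * (w σ.1 * x σ) / w τ else 0))
          = ∑ τ ∈ X.filter (fun τ => τ ⊆ σ.1 ∧ τ.card = k - 1),
              w σ.1 * x σ * (w σ.1 * x σ) / w τ := by
        simp only [and_self]
        rw [← Finset.sum_filter, hT, Finset.filter_filter]
        apply Finset.sum_congr _ (fun _ _ => rfl)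
        ext a
        simp only [Finset.mem_filter]
        tauto
      rw [h1, Finset.sum_div, Finset.sum_mul, Finset.mul_sum, Finset.mul_sum]
      apply Finset.sum_congr rfl
      intro τ hτ2
      have hwτ : w τ ≠ 0 := ne_of_gt (hpos τ (Finset.mem_filter.mp hτ2).1)
      field_simp
    · rw [if_neg hss]
      have hne1 : σ.1 ≠ σ'.1 := fun h => hss (Subtype.ext h)
      have hint_lt : (σ.1 ∩ σ'.1).card < k := by
        have h1 : (σ.1 ∩ σ'.1).card ≤ k := by
          calc (σ.1 ∩ σ'.1).card ≤ σ.1.card := Finset.card_le_card Finset.inter_subset_left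
            _ = k := σ.2.2
        rcases eq_or_lt_of_le h1 with he | h
        · exfalso
          have h2 : σ.1 ∩ σ'.1 = σ.1 :=
            Finset.eq_of_subset_of_card_le Finset.inter_subset_left (by rw [σ.2.2, he])
          have h3 : σ.1 ⊆ σ'.1 := by rw [← h2]; exact Finset.inter_subset_right
          exact hne1 (Finset.eq_of_subset_of_card_le h3 (by rw [σ.2.2, σ'.2.2]))
        · exact h
      by_cases hc : (σ.1 ∩ σ'.1).card = k - 1
      · rw [if_pos hc]
        have hmem : σ.1 ∩ σ'.1 ∈ T := by
          rw [hT]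
          exact Finset.mem_filter.mpr ⟨hdown σ.1 σ.2.1 _ Finset.inter_subset_left, hc⟩
        have hsum1 : (∑ τ ∈ T, (if τ ⊆ σ.1 ∧ τ ⊆ σ'.1 then
              w σ.1 * x σ * (w σ'.1 * x σ') / w τ else 0))
            = w σ.1 * x σ * (w σ'.1 * x σ') / w (σ.1 ∩ σ'.1) := by
          rw [Finset.sum_eq_single_of_mem _ hmem, if_pos
            ⟨Finset.inter_subset_left, Finset.inter_subset_right⟩]
          intro τ hτ hτne
          rw [if_neg]
          rintro ⟨hs1, hs2⟩
          have hsub : τ ⊆ σ.1 ∩ σ'.1 := Finset.subset_inter hs1 hs2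
          exact hτne (Finset.eq_of_subset_of_card_le hsub
            (by rw [hc, ((Finset.mem_filter.mp hτ).2 : τ.card = k - 1)]))
        have hsum2 : (∑ τ ∈ T, (if (τ ⊆ σ.1 ∧ τ ⊆ σ'.1) ∧ σ ≠ σ' ∧ σ.1 ∪ σ'.1 ∈ X then
              w (σ.1 ∪ σ'.1) * x σ * x σ' else 0))
            = if σ.1 ∪ σ'.1 ∈ X then w (σ.1 ∪ σ'.1) * x σ * x σ' else 0 := by
          rw [Finset.sum_eq_single_of_mem _ hmem]
          · by_cases hu : σ.1 ∪ σ'.1 ∈ X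
            · rw [if_pos ⟨⟨Finset.inter_subset_left, Finset.inter_subset_right⟩, hss, hu⟩,
                if_pos hu]
            · rw [if_neg (fun h => hu h.2.2), if_neg hu]
          · intro τ hτ hτne
            rw [if_neg]
            rintro ⟨⟨hs1, hs2⟩, -⟩
            have hsub : τ ⊆ σ.1 ∩ σ'.1 := Finset.subset_inter hs1 hs2
            exact hτne (Finset.eq_of_subset_of_card_le hsub
              (by rw [hc, ((Finset.mem_filter.mp hτ).2 : τ.card = k - 1)]))
        rw [hsum1, hsum2]
        have hwi : w (σ.1 ∩ σ'.1) ≠ 0 :=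
          ne_of_gt (hpos _ (hdown σ.1 σ.2.1 _ Finset.inter_subset_left))
        by_cases hu : σ.1 ∪ σ'.1 ∈ X
        · rw [if_pos hu, if_pos hu]
          field_simp
        · rw [if_neg hu, if_neg hu]
          field_simp
          ring
      · rw [if_neg hc]
        have hall : ∀ τ ∈ T, ((if τ ⊆ σ.1 ∧ τ ⊆ σ'.1 then
              w σ.1 * x σ * (w σ'.1 * x σ') / w τ else 0)) = 0 := by
          intro τ hτ
          rw [if_neg]
          rintro ⟨hs1, hs2⟩
          have hsub : τ ⊆ σ.1 ∩ σ'.1 := Finset.subset_inter hs1 hs2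
          have hca := Finset.card_le_card hsub
          have hcτ : τ.card = k - 1 := (Finset.mem_filter.mp hτ).2
          omega
        have hall2 : ∀ τ ∈ T, ((if (τ ⊆ σ.1 ∧ τ ⊆ σ'.1) ∧ σ ≠ σ' ∧ σ.1 ∪ σ'.1 ∈ X then
              w (σ.1 ∪ σ'.1) * x σ * x σ' else 0)) = 0 := by
          intro τ hτ
          rw [if_neg]
          rintro ⟨⟨hs1, hs2⟩, -⟩
          have hsub : τ ⊆ σ.1 ∩ σ'.1 := Finset.subset_inter hs1 hs2
          have hca := Finset.card_le_card hsub
          have hcτ : τ.card = k - 1 := (Finset.mem_filter.mp hτ).2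
          omega
        rw [Finset.sum_eq_zero hall, Finset.sum_eq_zero hall2]
        ring
  have hqf : ((k:ℝ)+1) * (x ⬝ᵥ M *ᵥ x)
      = ∑ τ ∈ T,
          ((∑ σ : Face n X k, ∑ σ' : Face n X k,
              (if τ ⊆ σ.1 ∧ τ ⊆ σ'.1 then w σ.1 * x σ * (w σ'.1 * x σ') / w τ else 0))
            - (∑ σ : Face n X k, ∑ σ' : Face n X k,
              (if (τ ⊆ σ.1 ∧ τ ⊆ σ'.1) ∧ σ ≠ σ' ∧ σ.1 ∪ σ'.1 ∈ X
                then w (σ.1 ∪ σ'.1) * x σ * x σ' else 0))) := by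
    have h1 : x ⬝ᵥ M *ᵥ x = ∑ σ : Face n X k, ∑ σ' : Face n X k, x σ * (M σ σ' * x σ') := by
      simp only [dotProduct, Matrix.mulVec, Finset.mul_sum]
    rw [h1, Finset.mul_sum]
    have h2 : ∀ σ : Face n X k, ((k:ℝ)+1) * ∑ σ' : Face n X k, x σ * (M σ σ' * x σ')
        = ∑ σ' : Face n X k, ((k:ℝ)+1) * (x σ * (M σ σ' * x σ')) := fun σ =>
      Finset.mul_sum _ _ _
    rw [Finset.sum_congr rfl fun σ _ => h2 σ]
    rw [Finset.sum_congr rfl fun σ _ => Finset.sum_congr rfl fun σ' _ => (key σ σ').symm]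
    rw [Finset.sum_congr rfl fun σ (_ : σ ∈ (Finset.univ : Finset (Face n X k))) => Finset.sum_comm]
    rw [Finset.sum_comm]
    apply Finset.sum_congr rfl
    intro τ _
    rw [← Finset.sum_sub_distrib]
    exact Finset.sum_congr rfl fun σ _ => Finset.sum_sub_distrib _ _
  have hτnn : ∀ τ ∈ T,
      0 ≤ ((∑ σ : Face n X k, ∑ σ' : Face n X k,
              (if τ ⊆ σ.1 ∧ τ ⊆ σ'.1 then w σ.1 * x σ * (w σ'.1 * x σ') / w τ else 0))
            - (∑ σ : Face n X k, ∑ σ' : Face n X k,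
              (if (τ ⊆ σ.1 ∧ τ ⊆ σ'.1) ∧ σ ≠ σ' ∧ σ.1 ∪ σ'.1 ∈ X
                then w (σ.1 ∪ σ'.1) * x σ * x σ' else 0))) := by
    intro τ hτ
    obtain ⟨hτX, hτcard⟩ := Finset.mem_filter.mp hτ
    have hτc1 : τ.card + 1 = k := by omega
    have hwτ : 0 < w τ := hpos τ hτX
    set y : Fin n → ℝ := fun i => if h : i ∉ τ ∧ insert i τ ∈ X then
        x ⟨insert i τ, h.2, by rw [Finset.card_insert_of_notMem h.1, hτc1]⟩ else 0 with hy
    have hyfn : ∀ i (h : i ∉ τ ∧ insert i τ ∈ X),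
        y i = x ⟨insert i τ, h.2, by rw [Finset.card_insert_of_notMem h.1, hτc1]⟩ := by
      intro i h
      rw [hy]
      exact dif_pos h
    have hy0 : ∀ i, ¬(i ∉ τ ∧ insert i τ ∈ X) → y i = 0 := by
      intro i h
      rw [hy]
      exact dif_neg h
    have hlink := link_quadform _ d X w hX hw hlse k hk1 hkd τ hτX (by omega) y
    set Sface := ∑ σ ∈ Finset.univ.filter (fun σ : Face n X k => τ ⊆ σ.1), w σ.1 * x σ
      with hSface
    have hS : (∑ i ∈ Finset.univ.filter (fun i => i ∉ τ ∧ insert i τ ∈ X),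
        w (insert i τ) * y i) = Sface := by
      rw [hSface, face_sum _ X k τ hτc1 (fun σ => w σ.1 * x σ)]
      apply Finset.sum_congr rfl
      intro i hi
      have h := (Finset.mem_filter.mp hi).2
      rw [dif_pos h, hyfn i h]
    have hF1 : (∑ σ : Face n X k, ∑ σ' : Face n X k,
          (if τ ⊆ σ.1 ∧ τ ⊆ σ'.1 then w σ.1 * x σ * (w σ'.1 * x σ') / w τ else 0))
        = Sface * Sface / w τ := by
      rw [hSface]
      simp only [Finset.sum_filter]
      rw [Finset.sum_mul_sum, Finset.sum_div]
      apply Finset.sum_congr rfl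
      intro σ _
      rw [Finset.sum_div]
      apply Finset.sum_congr rfl
      intro σ' _
      split_ifs with h1 h2 h3 h4 <;> first | (exfalso; tauto) | simp | rfl
    have hF2 := pair_conv _ X w hdown k τ hτc1 x y hyfn hy0
    rw [hF1, hF2]
    rw [hS] at hlink
    rw [sub_nonneg, le_div_iff₀ hwτ]
    calc (∑ i, ∑ j, linkMat n X w τ i j * y i * y j) * w τ
        = w τ * (∑ i, ∑ j, linkMat n X w τ i j * y i * y j) := mul_comm _ _
      _ ≤ Sface ^ 2 := hlink
      _ = Sface * Sface := sq Sface
  have hsum : 0 ≤ ((k:ℝ)+1) * (x ⬝ᵥ M *ᵥ x) := hqf ▸ Finset.sum_nonneg hτnn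
  nlinarith [hsum, hkRpos]
end
end

section
/- Let (X,w) be a pure d-dimensional simplicial complex on {1,…,n} with a balanced weight function, and let 1 ≤ k < d. Then: (i) P_k^∧ and P_{k+1}^∨ are row-stochastic (nonnegative entries, each row summing to 1); (ii) the matrices D_k·P_k^∧ and D_{k+1}·P_{k+1}^∨ are symmetric and positive semidefinite, where D_j is the diagonal matrix indexed by X(j) with entries w(τ); and (iii) P_k^∧ and P_{k+1}^∨ have the same nonzero eigenvalues with the same multiplicities: x^{|X(k+1)|}·charpoly(P_k^∧)(x) = x^{|X(k)|}·charpoly(P_{k+1}^∨)(x) as polynomials in x. -/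
open Matrix Finset
open scoped Classical

noncomputable section

variable (n : ℕ)

section
open Polynomial
lemma charpoly_mul_comm_rect {R : Type*} [CommRing R] {m p : Type*} [Fintype m] [Fintype p]
    [DecidableEq m] [DecidableEq p] (A : Matrix m p R) (B : Matrix p m R) :
    (A * B).charpoly * Polynomial.X ^ (Fintype.card p)
      = Polynomial.X ^ (Fintype.card m) * (B * A).charpoly := by
  set A' := A.map (Polynomial.C : R →+* R[X]) with hA'
  set B' := B.map (Polynomial.C : R →+* R[X]) with hB'
  have hAB : (A * B).map (Polynomial.C : R →+* R[X]) = A' * B' := by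
    simp [hA', hB', Matrix.map_mul]
  have hBA : (B * A).map (Polynomial.C : R →+* R[X]) = B' * A' := by
    simp [hA', hB', Matrix.map_mul]
  have hcm : charmatrix (A * B) = Matrix.scalar m (X : R[X]) - (A * B).map Polynomial.C := rfl
  have hcp : charmatrix (B * A) = Matrix.scalar p (X : R[X]) - (B * A).map Polynomial.C := rfl
  have hcomm : Matrix.scalar m (X : R[X]) * A' = A' * Matrix.scalar p (X : R[X]) := by
    ext i j
    simp [Matrix.scalar, Matrix.mul_diagonal, Matrix.diagonal_mul, mul_comm]
  have key1 : (Matrix.fromBlocks 1 A' 0 1 : Matrix (m ⊕ p) (m ⊕ p) R[X])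
      * Matrix.fromBlocks (charmatrix (A * B)) 0 B' (Matrix.scalar p (X : R[X]))
      = Matrix.fromBlocks (Matrix.scalar m (X : R[X])) (A' * Matrix.scalar p (X : R[X])) B'
          (Matrix.scalar p (X : R[X])) := by
    rw [Matrix.fromBlocks_multiply]
    simp only [one_mul, mul_one, zero_mul, mul_zero, add_zero, zero_add, Matrix.zero_mul, Matrix.mul_zero, Matrix.one_mul, Matrix.mul_one]
    rw [hcm, hAB, sub_add_cancel]
  have key2 : (Matrix.fromBlocks (Matrix.scalar m (X : R[X])) 0 B' 1 : Matrix (m ⊕ p) (m ⊕ p) R[X])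
      * Matrix.fromBlocks 1 A' 0 (charmatrix (B * A))
      = Matrix.fromBlocks (Matrix.scalar m (X : R[X])) (A' * Matrix.scalar p (X : R[X])) B'
          (Matrix.scalar p (X : R[X])) := by
    rw [Matrix.fromBlocks_multiply]
    simp only [one_mul, mul_one, zero_mul, mul_zero, add_zero, zero_add, Matrix.zero_mul, Matrix.mul_zero, Matrix.one_mul, Matrix.mul_one]
    rw [hcp, hBA, add_sub_cancel, hcomm]
  have dp : (Matrix.scalar p (X : R[X])).det = X ^ (Fintype.card p) := by
    simp [Matrix.scalar, Matrix.det_diagonal]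
  have dm : (Matrix.scalar m (X : R[X])).det = X ^ (Fintype.card m) := by
    simp [Matrix.scalar, Matrix.det_diagonal]
  have e1 := congrArg Matrix.det key1
  have e2 := congrArg Matrix.det key2
  rw [Matrix.det_mul, Matrix.det_fromBlocks_zero₂₁, Matrix.det_fromBlocks_zero₁₂,
    Matrix.det_one, Matrix.det_one, one_mul, one_mul, dp] at e1
  rw [Matrix.det_mul, Matrix.det_fromBlocks_zero₁₂, Matrix.det_fromBlocks_zero₂₁,
    Matrix.det_one, Matrix.det_one, mul_one, one_mul, dm] at e2
  rw [Matrix.charpoly, Matrix.charpoly, e1, ← e2]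

end

-- ===== helpers =====

def Mup (X : Finset (Finset (Fin n))) (w : Finset (Fin n) → ℝ) (k : ℕ) :
    Matrix (Face n X k) (Face n X (k+1)) ℝ :=
  Matrix.of fun τ σ => if τ.1 ⊆ σ.1 then w σ.1 / (((k : ℝ) + 1) * w τ.1) else 0

def Ndown (X : Finset (Finset (Fin n))) (w : Finset (Fin n) → ℝ) (k : ℕ) :
    Matrix (Face n X (k+1)) (Face n X k) ℝ :=
  Matrix.of fun σ τ => if τ.1 ⊆ σ.1 then 1 else 0

lemma sum_face {n : ℕ} (X : Finset (Finset (Fin n))) (k : ℕ) (f : Finset (Fin n) → ℝ) :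
    ∑ σ : Face n X k, f σ.1 = ∑ σ ∈ X.filter (fun σ => σ.card = k), f σ :=
  (Finset.sum_subtype _ (fun x => by simp [Finset.mem_filter]) f)|>.symm

lemma balanced_sum {n d k : ℕ} {X : Finset (Finset (Fin n))} {w : Finset (Fin n) → ℝ}
    (hw : IsBalanced n X d w) (hkd : k < d)
    (τ : Finset (Fin n)) (hτ : τ ∈ X) (hcard : τ.card = k) :
    ∑ σ : Face n X (k+1), (if τ ⊆ σ.1 then w σ.1 else 0) = w τ := by
  rw [sum_face X (k+1) (fun σ => if τ ⊆ σ then w σ else 0)]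
  rw [hw.2 τ hτ (by omega : τ.card < d), ← Finset.sum_filter, Finset.filter_filter]
  subst hcard
  apply Finset.sum_congr _ (fun _ _ => rfl)
  apply Finset.filter_congr
  intro σ _
  tauto

lemma count_sub {n d k : ℕ} {X : Finset (Finset (Fin n))}
    (hX : IsPureComplex n X d) (ρ : Face n X (k+1)) :
    ∑ τ : Face n X k, (if τ.1 ⊆ ρ.1 then (1:ℝ) else 0) = (k : ℝ) + 1 := by
  rw [sum_face X k (fun τ => if τ ⊆ ρ.1 then (1:ℝ) else 0), ← Finset.sum_filter,
    Finset.filter_filter]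
  have hset : X.filter (fun τ => τ.card = k ∧ τ ⊆ ρ.1) = ρ.1.powersetCard k := by
    ext τ
    simp only [Finset.mem_filter, Finset.mem_powersetCard]
    constructor
    · rintro ⟨_, h1, h2⟩; exact ⟨h2, h1⟩
    · rintro ⟨h1, h2⟩; exact ⟨hX.2.1 ρ.1 ρ.2.1 τ h1, h2, h1⟩
  rw [hset, Finset.sum_const, Finset.card_powersetCard, ρ.2.2, Nat.choose_succ_self_right]
  simp

lemma Pup_eq {n d k : ℕ} {X : Finset (Finset (Fin n))} {w : Finset (Fin n) → ℝ}
    (hX : IsPureComplex n X d) (hw : IsBalanced n X d w) (hkd : k < d) :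
    Pup n X w k = Mup n X w k * Ndown n X w k := by
  ext τ τ'
  rw [Matrix.mul_apply]
  simp only [Pup, Mup, Ndown, Matrix.of_apply]
  by_cases h : τ = τ'
  · subst h
    rw [if_pos rfl]
    have : ∀ σ : Face n X (k+1),
        (if τ.1 ⊆ σ.1 then w σ.1 / (((k : ℝ) + 1) * w τ.1) else 0) *
          (if τ.1 ⊆ σ.1 then (1:ℝ) else 0)
        = (if τ.1 ⊆ σ.1 then w σ.1 else 0) * (1 / (((k : ℝ) + 1) * w τ.1)) := by
      intro σ; split <;> ring
    rw [Finset.sum_congr rfl (fun σ _ => this σ), ← Finset.sum_mul,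
      balanced_sum hw hkd τ.1 τ.2.1 τ.2.2]
    have hτ : w τ.1 ≠ 0 := (hw.1 τ.1 τ.2.1).ne'
    field_simp
  · rw [if_neg h]
    have hne : τ.1 ≠ τ'.1 := fun e => h (Subtype.ext e)
    by_cases c : τ.1 ∪ τ'.1 ∈ X ∧ (τ.1 ∪ τ'.1).card = k + 1
    · rw [if_pos c]
      have key : ∀ σ : Face n X (k+1), τ.1 ⊆ σ.1 → τ'.1 ⊆ σ.1 → σ.1 = τ.1 ∪ τ'.1 := by
        intro σ h1 h2
        have hsub : τ.1 ∪ τ'.1 ⊆ σ.1 := Finset.union_subset h1 h2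
        exact (Finset.eq_of_subset_of_card_le hsub (by rw [σ.2.2, c.2])).symm
      rw [Finset.sum_eq_single (⟨τ.1 ∪ τ'.1, c.1, c.2⟩ : Face n X (k+1))]
      · rw [if_pos Finset.subset_union_left, if_pos Finset.subset_union_right, mul_one]
      · intro σ _ hσ
        by_cases h1 : τ.1 ⊆ σ.1
        · by_cases h2 : τ'.1 ⊆ σ.1
          · exact absurd (Subtype.ext (key σ h1 h2)) hσ
          · rw [if_neg h2, mul_zero]
        · rw [if_neg h1, zero_mul]
      · intro habs; exact absurd (Finset.mem_univ _) habs
    · rw [if_neg c]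
      symm
      apply Finset.sum_eq_zero
      intro σ _
      by_cases h1 : τ.1 ⊆ σ.1
      · by_cases h2 : τ'.1 ⊆ σ.1
        · exfalso
          have hsub : τ.1 ∪ τ'.1 ⊆ σ.1 := Finset.union_subset h1 h2
          have hmem : τ.1 ∪ τ'.1 ∈ X := hX.2.1 σ.1 σ.2.1 _ hsub
          have hle : (τ.1 ∪ τ'.1).card ≤ k + 1 := by
            have := Finset.card_le_card hsub; have := σ.2.2; omega
          have hge : k ≤ (τ.1 ∪ τ'.1).card := by
            have := Finset.card_le_card (Finset.subset_union_left : τ.1 ⊆ τ.1 ∪ τ'.1)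
            have := τ.2.2; omega
          have hnk : (τ.1 ∪ τ'.1).card ≠ k := by
            intro e
            have : τ.1 = τ.1 ∪ τ'.1 :=
              Finset.eq_of_subset_of_card_le Finset.subset_union_left (by omega)
            exact hne (by
              have h3 : τ'.1 ⊆ τ.1 := this ▸ Finset.subset_union_right
              exact (Finset.eq_of_subset_of_card_le h3 (by rw [τ.2.2, τ'.2.2])).symm)
          exact c ⟨hmem, by omega⟩
        · rw [if_neg h2, mul_zero]
      · rw [if_neg h1, zero_mul]

lemma Pdown_eq {n d k : ℕ} {X : Finset (Finset (Fin n))} {w : Finset (Fin n) → ℝ}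
    (hX : IsPureComplex n X d) (hw : IsBalanced n X d w) :
    Pdown n X w (k+1) = Ndown n X w k * Mup n X w k := by
  ext σ σ'
  rw [Matrix.mul_apply]
  simp only [Pdown, Mup, Ndown, Matrix.of_apply, Nat.add_sub_cancel, Nat.cast_add, Nat.cast_one]
  by_cases h : σ = σ'
  · subst h
    rw [if_pos rfl]
    have : ∀ τ : Face n X k,
        (if τ.1 ⊆ σ.1 then (1:ℝ) else 0) *
          (if τ.1 ⊆ σ.1 then w σ.1 / (((k : ℝ) + 1) * w τ.1) else 0)
        = (if τ.1 ⊆ σ.1 then w σ.1 / (((k : ℝ) + 1) * w τ.1) else 0) := by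
      intro τ; split <;> simp
    rw [Finset.sum_congr rfl (fun τ _ => this τ)]
    rw [sum_face X k (fun τ => if τ ⊆ σ.1 then w σ.1 / (((k : ℝ) + 1) * w τ) else 0),
      ← Finset.sum_filter, Finset.filter_filter]
    apply Finset.sum_congr
    · apply Finset.filter_congr; intro τ _; tauto
    · intro τ _; rfl
  · rw [if_neg h]
    have hne : σ.1 ≠ σ'.1 := fun e => h (Subtype.ext e)
    by_cases c : σ.1 ∩ σ'.1 ∈ X ∧ (σ.1 ∩ σ'.1).card = k
    · rw [if_pos c]
      rw [Finset.sum_eq_single (⟨σ.1 ∩ σ'.1, c.1, c.2⟩ : Face n X k)]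
      · rw [if_pos Finset.inter_subset_left, if_pos Finset.inter_subset_right, one_mul]
      · intro τ _ hτ
        by_cases h1 : τ.1 ⊆ σ.1
        · by_cases h2 : τ.1 ⊆ σ'.1
          · exfalso
            have hsub : τ.1 ⊆ σ.1 ∩ σ'.1 := Finset.subset_inter h1 h2
            exact hτ (Subtype.ext (Finset.eq_of_subset_of_card_le hsub (by rw [c.2, τ.2.2])))
          · rw [if_neg h2, mul_zero]
        · rw [if_neg h1, zero_mul]
      · intro habs; exact absurd (Finset.mem_univ _) habs
    · rw [if_neg c]
      symm
      apply Finset.sum_eq_zero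
      intro τ _
      by_cases h1 : τ.1 ⊆ σ.1
      · by_cases h2 : τ.1 ⊆ σ'.1
        · exfalso
          have hsub : τ.1 ⊆ σ.1 ∩ σ'.1 := Finset.subset_inter h1 h2
          have hmem : σ.1 ∩ σ'.1 ∈ X := hX.2.1 σ.1 σ.2.1 _ Finset.inter_subset_left
          have hge : k ≤ (σ.1 ∩ σ'.1).card := by
            have := Finset.card_le_card hsub; have := τ.2.2; omega
          have hle : (σ.1 ∩ σ'.1).card ≤ k + 1 := by
            have := Finset.card_le_card (Finset.inter_subset_left : σ.1 ∩ σ'.1 ⊆ σ.1)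
            have := σ.2.2; omega
          have hnk : (σ.1 ∩ σ'.1).card ≠ k + 1 := by
            intro e
            have h3 : σ.1 ∩ σ'.1 = σ.1 :=
              Finset.eq_of_subset_of_card_le Finset.inter_subset_left (by omega)
            have h4 : σ.1 ⊆ σ'.1 := h3 ▸ Finset.inter_subset_right
            exact hne (Finset.eq_of_subset_of_card_le h4 (by rw [σ.2.2, σ'.2.2]))
          exact c ⟨hmem, by omega⟩
        · rw [if_neg h2, mul_zero]
      · rw [if_neg h1, zero_mul]

lemma rowsum_Pup {n d k : ℕ} {X : Finset (Finset (Fin n))} {w : Finset (Fin n) → ℝ}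
    (hX : IsPureComplex n X d) (hw : IsBalanced n X d w) (hkd : k < d) (τ : Face n X k) :
    ∑ σ, Pup n X w k τ σ = 1 := by
  rw [Pup_eq hX hw hkd]
  have step1 : ∑ σ, (Mup n X w k * Ndown n X w k) τ σ
      = ∑ ρ : Face n X (k+1), Mup n X w k τ ρ * ((k:ℝ)+1) := by
    simp only [Matrix.mul_apply]
    rw [Finset.sum_comm]
    apply Finset.sum_congr rfl
    intro ρ _
    rw [← Finset.mul_sum]
    congr 1
    simpa [Ndown] using count_sub hX ρ
  rw [step1]
  have hτ0 : w τ.1 ≠ 0 := (hw.1 _ τ.2.1).ne'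
  have step2 : ∀ ρ : Face n X (k+1), Mup n X w k τ ρ * ((k:ℝ)+1)
      = (if τ.1 ⊆ ρ.1 then w ρ.1 else 0) * (1 / w τ.1) := by
    intro ρ
    simp only [Mup, Matrix.of_apply]
    split
    · field_simp
    · ring
  rw [Finset.sum_congr rfl (fun ρ _ => step2 ρ), ← Finset.sum_mul,
    balanced_sum hw hkd τ.1 τ.2.1 τ.2.2]
  field_simp

lemma rowsum_Pdown {n d k : ℕ} {X : Finset (Finset (Fin n))} {w : Finset (Fin n) → ℝ}
    (hX : IsPureComplex n X d) (hw : IsBalanced n X d w) (hkd : k < d) (σ : Face n X (k+1)) :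
    ∑ σ', Pdown n X w (k+1) σ σ' = 1 := by
  rw [Pdown_eq hX hw]
  simp only [Matrix.mul_apply]
  rw [Finset.sum_comm]
  have step1 : ∀ τ : Face n X k, ∑ σ' : Face n X (k+1), Mup n X w k τ σ' = 1 / ((k:ℝ)+1) := by
    intro τ
    have hτ0 : w τ.1 ≠ 0 := (hw.1 _ τ.2.1).ne'
    have : ∀ σ' : Face n X (k+1), Mup n X w k τ σ'
        = (if τ.1 ⊆ σ'.1 then w σ'.1 else 0) * (1 / (((k:ℝ)+1) * w τ.1)) := by
      intro σ'
      simp only [Mup, Matrix.of_apply]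
      split
      · ring
      · ring
    rw [Finset.sum_congr rfl (fun σ' _ => this σ'), ← Finset.sum_mul,
      balanced_sum hw hkd τ.1 τ.2.1 τ.2.2]
    field_simp
  calc ∑ τ : Face n X k, ∑ σ' : Face n X (k+1), Ndown n X w k σ τ * Mup n X w k τ σ'
      = ∑ τ : Face n X k, Ndown n X w k σ τ * (1 / ((k:ℝ)+1)) := by
        apply Finset.sum_congr rfl
        intro τ _
        rw [← Finset.mul_sum, step1 τ]
    _ = (((k:ℝ)+1)) * (1 / ((k:ℝ)+1)) := by
        rw [← Finset.sum_mul]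
        congr 1
        simpa [Ndown] using count_sub hX σ
    _ = 1 := by
        have : ((k:ℝ)+1) ≠ 0 := by positivity
        field_simp

def Cup (X : Finset (Finset (Fin n))) (w : Finset (Fin n) → ℝ) (k : ℕ) :
    Matrix (Face n X (k+1)) (Face n X k) ℝ :=
  Matrix.of fun σ τ => Real.sqrt (w σ.1 / ((k:ℝ)+1)) * (if τ.1 ⊆ σ.1 then 1 else 0)

def Cdown (X : Finset (Finset (Fin n))) (w : Finset (Fin n) → ℝ) (k : ℕ) :
    Matrix (Face n X k) (Face n X (k+1)) ℝ :=
  Matrix.of fun τ σ => Real.sqrt (1 / (((k:ℝ)+1) * w τ.1)) * (if τ.1 ⊆ σ.1 then w σ.1 else 0)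

lemma psd_up {n d k : ℕ} {X : Finset (Finset (Fin n))} {w : Finset (Fin n) → ℝ}
    (hX : IsPureComplex n X d) (hw : IsBalanced n X d w) (hkd : k < d) :
    Matrix.diagonal (fun τ : Face n X k => w τ.1) * Pup n X w k
      = (Cup n X w k)ᴴ * Cup n X w k := by
  rw [Pup_eq hX hw hkd]
  ext τ τ'
  rw [Matrix.diagonal_mul, Matrix.mul_apply, Finset.mul_sum, Matrix.mul_apply]
  apply Finset.sum_congr rfl
  intro σ _
  rw [Matrix.conjTranspose_apply, star_trivial]
  simp only [Cup, Mup, Ndown, Matrix.of_apply]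
  have ha : (0:ℝ) ≤ w σ.1 / ((k:ℝ)+1) := div_nonneg (hw.1 _ σ.2.1).le (by positivity)
  have hτ0 : w τ.1 ≠ 0 := (hw.1 _ τ.2.1).ne'
  by_cases h1 : τ.1 ⊆ σ.1 <;> by_cases h2 : τ'.1 ⊆ σ.1 <;> simp [h1, h2]
  rw [Real.mul_self_sqrt ha]
  field_simp

lemma psd_down {n d k : ℕ} {X : Finset (Finset (Fin n))} {w : Finset (Fin n) → ℝ}
    (hX : IsPureComplex n X d) (hw : IsBalanced n X d w) :
    Matrix.diagonal (fun σ : Face n X (k+1) => w σ.1) * Pdown n X w (k+1)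
      = (Cdown n X w k)ᴴ * Cdown n X w k := by
  rw [Pdown_eq hX hw]
  ext σ σ'
  rw [Matrix.diagonal_mul, Matrix.mul_apply, Finset.mul_sum, Matrix.mul_apply]
  apply Finset.sum_congr rfl
  intro τ _
  rw [Matrix.conjTranspose_apply, star_trivial]
  simp only [Cdown, Mup, Ndown, Matrix.of_apply]
  have hτ : (0:ℝ) < w τ.1 := hw.1 _ τ.2.1
  have ha : (0:ℝ) ≤ 1 / (((k:ℝ)+1) * w τ.1) := by positivity
  by_cases h1 : τ.1 ⊆ σ.1 <;> by_cases h2 : τ.1 ⊆ σ'.1 <;> simp [h1, h2]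
  rw [mul_mul_mul_comm, Real.mul_self_sqrt
    (mul_nonneg (inv_nonneg.mpr hτ.le) (by positivity : (0:ℝ) ≤ (((k:ℝ)+1))⁻¹))]
  field_simp


theorem stmt4 (n d : ℕ) (X : Finset (Finset (Fin n))) (w : Finset (Fin n) → ℝ)
    (hX : IsPureComplex n X d) (hw : IsBalanced n X d w)
    (k : ℕ) (hk1 : 1 ≤ k) (hkd : k < d) :
    -- (i) both walks are row-stochastic
    ((∀ τ σ : Face n X k, 0 ≤ Pup n X w k τ σ) ∧ (∀ τ : Face n X k, ∑ σ, Pup n X w k τ σ = 1) ∧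
     (∀ τ σ : Face n X (k+1), 0 ≤ Pdown n X w (k+1) τ σ) ∧
     (∀ τ : Face n X (k+1), ∑ σ, Pdown n X w (k+1) τ σ = 1)) ∧
    -- (ii) `D_k P_k^∧` and `D_{k+1} P_{k+1}^∨` are symmetric PSD
    ((Matrix.diagonal (fun τ : Face n X k => w τ.1) * Pup n X w k).PosSemidef ∧
     (Matrix.diagonal (fun τ : Face n X (k+1) => w τ.1) * Pdown n X w (k+1)).PosSemidef) ∧
    -- (iii) same nonzero eigenvalues with multiplicity, via characteristic polynomials
    (Polynomial.X ^ (Fintype.card (Face n X (k+1))) * (Pup n X w k).charpoly =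
      Polynomial.X ^ (Fintype.card (Face n X k)) * (Pdown n X w (k+1)).charpoly) := by
  refine ⟨⟨?_, ?_, ?_, ?_⟩, ⟨?_, ?_⟩, ?_⟩
  · intro τ σ
    simp only [Pup, Matrix.of_apply]
    split_ifs with h1 h2
    · positivity
    · exact div_nonneg (hw.1 _ h2.1).le
        (mul_nonneg (by positivity) (hw.1 _ τ.2.1).le)
    · exact le_refl 0
  · exact fun τ => rowsum_Pup hX hw hkd τ
  · intro σ σ'
    simp only [Pdown, Matrix.of_apply]
    split_ifs with h1 h2
    · apply Finset.sum_nonneg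
      intro τ hτ
      exact div_nonneg (hw.1 _ σ.2.1).le
        (mul_nonneg (Nat.cast_nonneg _) (hw.1 τ (Finset.mem_filter.mp hτ).1).le)
    · exact div_nonneg (hw.1 _ σ'.2.1).le
        (mul_nonneg (Nat.cast_nonneg _) (hw.1 _ h2.1).le)
    · exact le_refl 0
  · exact fun σ => rowsum_Pdown hX hw hkd σ
  · rw [psd_up hX hw hkd]
    exact Matrix.posSemidef_conjTranspose_mul_self _
  · rw [psd_down hX hw]
    exact Matrix.posSemidef_conjTranspose_mul_self _
  · have h := charpoly_mul_comm_rect (Mup n X w k) (Ndown n X w k)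
    rw [← Pup_eq hX hw hkd, ← Pdown_eq hX hw,
      mul_comm ((Pup n X w k).charpoly)] at h
    exact h

end
end

section
/- Let p ∈ ℝ[x₁,…,xₙ] be a nonzero homogeneous polynomial of degree at least 2 with nonnegative coefficients that is log-concave at 𝟙. Then p is indecomposable. -/
open MvPolynomial Matrix Finset
open scoped Classical

noncomputable section

abbrev MP (n : ℕ) := MvPolynomial (Fin n) ℝ

/-- Iterated partial derivative along a list of indices. -/
def derivList {n : ℕ} (l : List (Fin n)) (q : MP n) : MP n :=
  l.foldr (fun i r => pderiv i r) q

/-- Gradient at the all-ones point. -/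
def gradOne {n : ℕ} (q : MP n) : Fin n → ℝ := fun i => eval (fun _ => (1:ℝ)) (pderiv i q)

/-- Hessian at the all-ones point. -/
def hessOne {n : ℕ} (q : MP n) : Matrix (Fin n) (Fin n) ℝ :=
  Matrix.of fun i j => eval (fun _ => (1:ℝ)) (pderiv i (pderiv j q))

/-- `q` is log-concave at the all-ones point: `q(𝟙)·∇²q(𝟙) − ∇q(𝟙)∇q(𝟙)ᵀ` is NSD,
equivalently its negation is PSD. -/
def LogConcaveAtOne {n : ℕ} (q : MP n) : Prop :=
  (vecMulVec (gradOne q) (gradOne q) - eval (fun _ => (1:ℝ)) q • hessOne q).PosSemidef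

/-- `q` is strongly log-concave at the all-ones point. -/
def StronglyLogConcaveAtOne {n : ℕ} (q : MP n) : Prop :=
  ∀ l : List (Fin n), LogConcaveAtOne (derivList l q)

/-- `p` is decomposable: it is the sum of two nonconstant polynomials in disjoint
sets of variables. -/
def Decomposable {n : ℕ} (p : MP n) : Prop :=
  ∃ I : Finset (Fin n), I.Nonempty ∧ I ≠ Finset.univ ∧
    ∃ g h : MP n, 0 < g.totalDegree ∧ 0 < h.totalDegree ∧
      g.vars ⊆ I ∧ Disjoint h.vars I ∧ p = g + h

lemma evalOne_eq {n : ℕ} (q : MP n) :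
    eval (fun _ => (1:ℝ)) q = ∑ m ∈ q.support, coeff m q := by
  conv_lhs => rw [q.as_sum]
  rw [map_sum]
  refine Finset.sum_congr rfl fun m _ => ?_
  simp [eval_monomial, Finsupp.prod]

lemma evalOne_pderiv {n : ℕ} (q : MP n) (i : Fin n) :
    eval (fun _ => (1:ℝ)) (pderiv i q) = ∑ m ∈ q.support, coeff m q * (m i : ℝ) := by
  conv_lhs => rw [q.as_sum]
  rw [map_sum, map_sum]
  refine Finset.sum_congr rfl fun m _ => ?_
  simp [pderiv_monomial, eval_monomial, Finsupp.prod]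

lemma degree_of_mem_support {n d : ℕ} {p : MP n} (hhom : p.IsHomogeneous d)
    {m : Fin n →₀ ℕ} (hm : m ∈ p.support) : ∑ i, m i = d := by
  have h1 : m.degree = d := by
    by_contra hne
    exact (mem_support_iff.mp hm) (hhom.coeff_eq_zero hne)
  rw [Finsupp.degree] at h1
  rw [← h1]
  exact (Finset.sum_subset (Finset.subset_univ _)
    (fun i _ hi => Finsupp.notMem_support_iff.mp hi)).symm

lemma pderiv_pderiv_eq_zero {n : ℕ} {q : MP n} {i j : Fin n}
    (hi : i ∉ q.vars) (_hij : i ≠ j) : pderiv i (pderiv j q) = 0 := by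
  conv_lhs => rw [q.as_sum]
  rw [map_sum, map_sum]
  refine Finset.sum_eq_zero fun m hm => ?_
  rw [pderiv_monomial, pderiv_monomial]
  have h0 : m i = 0 := by
    by_contra hc
    exact hi ((mem_vars i).mpr ⟨m, hm, Finsupp.mem_support_iff.mpr hc⟩)
  have h1 : ((m - Finsupp.single j 1 : Fin n →₀ ℕ) i) = 0 := by
    rw [Finsupp.tsub_apply, h0]; simp
  simp [h1]

lemma euler_col {n d : ℕ} {p : MP n} (hhom : p.IsHomogeneous d) (hd : 1 ≤ d) (j : Fin n) :
    ∑ i, eval (fun _ => (1:ℝ)) (pderiv i (pderiv j p))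
      = ((d:ℝ) - 1) * eval (fun _ => (1:ℝ)) (pderiv j p) := by
  have hpj : pderiv j p = ∑ m ∈ p.support,
      monomial (m - Finsupp.single j 1) (coeff m p * (m j : ℝ)) := by
    conv_lhs => rw [p.as_sum]
    rw [map_sum]
    exact Finset.sum_congr rfl fun m _ => by rw [pderiv_monomial]
  rw [hpj]
  have hL : ∀ i : Fin n, eval (fun _ => (1:ℝ)) (pderiv i (∑ m ∈ p.support,
      monomial (m - Finsupp.single j 1) (coeff m p * (m j : ℝ))))
      = ∑ m ∈ p.support, coeff m p * (m j : ℝ) * (((m - Finsupp.single j 1 : Fin n →₀ ℕ) i : ℕ) : ℝ) := by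
    intro i
    rw [map_sum, map_sum]
    refine Finset.sum_congr rfl fun m _ => ?_
    simp [pderiv_monomial, eval_monomial, Finsupp.prod]
  have hR : eval (fun _ => (1:ℝ)) (∑ m ∈ p.support,
      monomial (m - Finsupp.single j 1) (coeff m p * (m j : ℝ)))
      = ∑ m ∈ p.support, coeff m p * (m j : ℝ) := by
    rw [map_sum]
    refine Finset.sum_congr rfl fun m _ => ?_
    simp [eval_monomial, Finsupp.prod]
  simp only [hL, hR]
  rw [Finset.sum_comm, Finset.mul_sum]
  refine Finset.sum_congr rfl fun m hm => ?_
  rcases Nat.eq_zero_or_pos (m j) with h0 | h0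
  · simp [h0]
  · have hsum : ∑ i, ((m - Finsupp.single j 1 : Fin n →₀ ℕ) i) = d - 1 := by
      have hdm : ∑ i, m i = d := degree_of_mem_support hhom hm
      have hjm : (∑ i ∈ Finset.univ.erase j, m i) + m j = d := by
        rw [Finset.sum_erase_add _ _ (Finset.mem_univ j)]; exact hdm
      have : ∑ i, ((m - Finsupp.single j 1 : Fin n →₀ ℕ) i)
          = (∑ i ∈ Finset.univ.erase j, m i) + (m j - 1) := by
        rw [← Finset.sum_erase_add _ _ (Finset.mem_univ j)]
        congr 1
        · refine Finset.sum_congr rfl fun i hi => ?_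
          rw [Finsupp.tsub_apply, Finsupp.single_apply,
            if_neg (Finset.ne_of_mem_erase hi).symm]
          simp
        · rw [Finsupp.tsub_apply, Finsupp.single_apply, if_pos rfl]
      rw [this]; omega
    rw [← Finset.mul_sum, ← Nat.cast_sum, hsum]
    have : ((d - 1 : ℕ) : ℝ) = (d:ℝ) - 1 := by
      have := Nat.cast_sub hd (R := ℝ); simpa using this
    rw [this]; ring

theorem stmt14' (n d : ℕ) (hd : 2 ≤ d) (p : MP n) (hp0 : p ≠ 0)
    (hhom : p.IsHomogeneous d) (hnn : ∀ m, 0 ≤ coeff m p)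
    (hlc : (vecMulVec (fun i => eval (fun _ => (1:ℝ)) (pderiv i p))
        (fun i => eval (fun _ => (1:ℝ)) (pderiv i p))
      - eval (fun _ => (1:ℝ)) p •
        Matrix.of (fun i j => eval (fun _ => (1:ℝ)) (pderiv i (pderiv j p)))).PosSemidef) :
    ¬ ∃ I : Finset (Fin n), I.Nonempty ∧ I ≠ Finset.univ ∧
    ∃ g h : MP n, 0 < g.totalDegree ∧ 0 < h.totalDegree ∧
      g.vars ⊆ I ∧ Disjoint h.vars I ∧ p = g + h := by
  rintro ⟨I, -, -, g, h, hg, hh, hgI, hhI, rfl⟩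
  have hd1 : 1 ≤ d := le_trans (by norm_num) hd
  set γ : Fin n → ℝ := fun i => eval (fun _ => (1:ℝ)) (pderiv i (g + h)) with hγdef
  set H : Matrix (Fin n) (Fin n) ℝ :=
    Matrix.of (fun i j => eval (fun _ => (1:ℝ)) (pderiv i (pderiv j (g + h)))) with hHdef
  set P : ℝ := eval (fun _ => (1:ℝ)) (g + h) with hPdef
  set α : ℝ := ∑ i ∈ I, γ i with hαdef
  set β : ℝ := ∑ i ∈ Iᶜ, γ i with hβdef
  have hγnn : ∀ i, 0 ≤ γ i := fun i => by
    simp only [hγdef, evalOne_pderiv]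
    exact Finset.sum_nonneg fun m _ => mul_nonneg (hnn m) (Nat.cast_nonneg _)
  have hkey : ∀ (q : MP n), 0 < q.totalDegree →
      (∀ m ∈ q.support, m.support.Nonempty → coeff m (g+h) = coeff m q) →
      ∃ i₀, i₀ ∈ q.vars ∧ 0 < γ i₀ := by
    intro q hq hqc
    rw [totalDegree] at hq
    obtain ⟨m, hmq, hmdeg⟩ := Finset.lt_sup_iff.mp hq
    have hmsupp : m.support.Nonempty := by
      rcases Finset.eq_empty_or_nonempty m.support with he | hne
      · exfalso; rw [Finsupp.support_eq_empty] at he; subst he; simp at hmdeg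
      · exact hne
    obtain ⟨i₀, hi₀m⟩ := hmsupp
    refine ⟨i₀, (mem_vars i₀).mpr ⟨m, hmq, hi₀m⟩, ?_⟩
    have hcm : coeff m (g + h) ≠ 0 := by
      rw [hqc m hmq ⟨i₀, hi₀m⟩]; exact mem_support_iff.mp hmq
    simp only [hγdef, evalOne_pderiv]
    refine Finset.sum_pos' (fun m' _ => mul_nonneg (hnn m') (Nat.cast_nonneg _))
      ⟨m, mem_support_iff.mpr hcm, ?_⟩
    refine mul_pos (lt_of_le_of_ne (hnn m) (Ne.symm hcm)) ?_
    exact_mod_cast Nat.pos_of_ne_zero (Finsupp.mem_support_iff.mp hi₀m)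
  obtain ⟨i₀, hi₀v, hi₀γ⟩ := hkey g hg (by
    rintro m hm ⟨i, hi⟩
    have hiI : i ∈ I := hgI ((mem_vars i).mpr ⟨m, hm, hi⟩)
    have hch : coeff m h = 0 := by
      by_contra hc
      exact (Finset.disjoint_left.mp hhI
        ((mem_vars i).mpr ⟨m, mem_support_iff.mpr hc, hi⟩)) hiI
    rw [coeff_add, hch, add_zero])
  obtain ⟨j₀, hj₀v, hj₀γ⟩ := hkey h hh (by
    rintro m hm ⟨i, hi⟩
    have hiI : i ∉ I := Finset.disjoint_left.mp hhI ((mem_vars i).mpr ⟨m, hm, hi⟩)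
    have hcg : coeff m g = 0 := by
      by_contra hc
      exact hiI (hgI ((mem_vars i).mpr ⟨m, mem_support_iff.mpr hc, hi⟩))
    rw [coeff_add, hcg, zero_add])
  have hi₀I : i₀ ∈ I := hgI hi₀v
  have hj₀I : j₀ ∈ Iᶜ := Finset.mem_compl.mpr (Finset.disjoint_left.mp hhI hj₀v)
  have hα : 0 < α := Finset.sum_pos' (fun i _ => hγnn i) ⟨i₀, hi₀I, hi₀γ⟩
  have hβ : 0 < β := Finset.sum_pos' (fun i _ => hγnn i) ⟨j₀, hj₀I, hj₀γ⟩
  have hP : 0 < P := by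
    rw [hPdef, evalOne_eq]
    obtain ⟨m, hm⟩ := support_nonempty.mpr hp0
    exact Finset.sum_pos' (fun m' _ => hnn m')
      ⟨m, hm, lt_of_le_of_ne (hnn m) (Ne.symm (mem_support_iff.mp hm))⟩
  have hcross1 : ∀ i ∈ I, ∀ j ∈ Iᶜ, H i j = 0 := by
    intro i hi j hj
    have hij : i ≠ j := fun e => (Finset.mem_compl.mp hj) (e ▸ hi)
    have h1 : pderiv j g = 0 := pderiv_eq_zero_of_notMem_vars
      (fun hv => (Finset.mem_compl.mp hj) (hgI hv))
    have h2 : pderiv i (pderiv j h) = 0 := pderiv_pderiv_eq_zero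
      (fun hv => (Finset.disjoint_left.mp hhI hv) hi) hij
    show eval _ (pderiv i (pderiv j (g + h))) = 0
    simp [h1, h2]
  have hcross2 : ∀ i ∈ Iᶜ, ∀ j ∈ I, H i j = 0 := by
    intro i hi j hj
    have hij : i ≠ j := fun e => (Finset.mem_compl.mp hi) (e ▸ hj)
    have h1 : pderiv i (pderiv j g) = 0 := pderiv_pderiv_eq_zero
      (fun hv => (Finset.mem_compl.mp hi) (hgI hv)) hij
    have h2 : pderiv j h = 0 := pderiv_eq_zero_of_notMem_vars
      (fun hv => (Finset.disjoint_left.mp hhI hv) hj)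
    show eval _ (pderiv i (pderiv j (g + h))) = 0
    simp [h1, h2]
  have hcol : ∀ j, ∑ i, H i j = ((d:ℝ) - 1) * γ j := fun j => euler_col hhom hd1 j
  set x : Fin n → ℝ := fun i => if i ∈ I then β else -α with hxdef
  have hxI : ∀ i ∈ I, x i = β := fun i hi => by rw [hxdef]; simp [hi]
  have hxC : ∀ i ∈ Iᶜ, x i = -α := fun i hi => by
    rw [hxdef]; simp [Finset.mem_compl.mp hi]
  have hS := hlc.dotProduct_mulVec_nonneg x
  have hstar : star x = x := by funext i; simp
  rw [hstar, Matrix.sub_mulVec, dotProduct_sub] at hS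
  have h1 : dotProduct x (vecMulVec γ γ *ᵥ x) = (∑ i, x i * γ i) * (∑ j, x j * γ j) := by
    simp only [dotProduct, mulVec, vecMulVec_apply]
    rw [Finset.sum_mul_sum]
    refine Finset.sum_congr rfl fun i _ => ?_
    rw [Finset.mul_sum]
    exact Finset.sum_congr rfl fun j _ => by ring
  have h2 : (∑ i, x i * γ i) = 0 := by
    rw [← Finset.sum_add_sum_compl I]
    have e1 : ∑ i ∈ I, x i * γ i = β * α := by
      have : ∑ i ∈ I, x i * γ i = ∑ i ∈ I, β * γ i :=
        Finset.sum_congr rfl fun i hi => by rw [hxI i hi]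
      rw [this, ← Finset.mul_sum, ← hαdef]
    have e2 : ∑ i ∈ Iᶜ, x i * γ i = -α * β := by
      have : ∑ i ∈ Iᶜ, x i * γ i = ∑ i ∈ Iᶜ, -α * γ i :=
        Finset.sum_congr rfl fun i hi => by rw [hxC i hi]
      rw [this, ← Finset.mul_sum, ← hβdef]
    rw [e1, e2]; ring
  have hSrow1 : ∀ i ∈ I, (∑ j, H i j * x j) = (∑ j ∈ I, H i j) * β := by
    intro i hi
    rw [← Finset.sum_add_sum_compl I]
    have z : ∑ j ∈ Iᶜ, H i j * x j = 0 :=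
      Finset.sum_eq_zero fun j hj => by rw [hcross1 i hi j hj, zero_mul]
    rw [z, add_zero, Finset.sum_mul]
    exact Finset.sum_congr rfl fun j hj => by rw [hxI j hj]
  have hSrow2 : ∀ i ∈ Iᶜ, (∑ j, H i j * x j) = (∑ j ∈ Iᶜ, H i j) * (-α) := by
    intro i hi
    rw [← Finset.sum_add_sum_compl I]
    have z : ∑ j ∈ I, H i j * x j = 0 :=
      Finset.sum_eq_zero fun j hj => by rw [hcross2 i hi j hj, zero_mul]
    rw [z, zero_add, Finset.sum_mul]
    exact Finset.sum_congr rfl fun j hj => by rw [hxC j hj]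
  have hA : ∑ i ∈ I, ∑ j ∈ I, H i j = ((d:ℝ) - 1) * α := by
    rw [show ∑ i ∈ I, ∑ j ∈ I, H i j = ∑ j ∈ I, ∑ i ∈ I, H i j from Finset.sum_comm]
    have e : ∀ j ∈ I, ∑ i ∈ I, H i j = ((d:ℝ) - 1) * γ j := by
      intro j hj
      rw [Finset.sum_subset (Finset.subset_univ I)
        (fun i _ hi => hcross2 i (Finset.mem_compl.mpr hi) j hj), hcol j]
    rw [Finset.sum_congr rfl e, ← Finset.mul_sum, ← hαdef]
  have hB : ∑ i ∈ Iᶜ, ∑ j ∈ Iᶜ, H i j = ((d:ℝ) - 1) * β := by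
    rw [show ∑ i ∈ Iᶜ, ∑ j ∈ Iᶜ, H i j = ∑ j ∈ Iᶜ, ∑ i ∈ Iᶜ, H i j from Finset.sum_comm]
    have e : ∀ j ∈ Iᶜ, ∑ i ∈ Iᶜ, H i j = ((d:ℝ) - 1) * γ j := by
      intro j hj
      rw [Finset.sum_subset (Finset.subset_univ Iᶜ)
        (fun i _ hi => hcross1 i (by simpa using hi) j hj), hcol j]
    rw [Finset.sum_congr rfl e, ← Finset.mul_sum, ← hβdef]
  have hdot2 : dotProduct x (H *ᵥ x)
      = β * (((d:ℝ) - 1) * α * β) + (-α) * (((d:ℝ) - 1) * β * (-α)) := by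
    have expand : dotProduct x (H *ᵥ x) = ∑ i, x i * (∑ j, H i j * x j) := by
      simp only [dotProduct, mulVec]
    rw [expand, ← Finset.sum_add_sum_compl I]
    have e1 : ∑ i ∈ I, x i * (∑ j, H i j * x j) = β * (((d:ℝ) - 1) * α * β) := by
      have t1 : ∑ i ∈ I, x i * (∑ j, H i j * x j)
          = (∑ i ∈ I, ∑ j ∈ I, H i j) * (β * β) := by
        rw [Finset.sum_mul]
        refine Finset.sum_congr rfl fun i hi => ?_
        rw [hxI i hi, hSrow1 i hi]; ring
      rw [t1, hA]; ring
    have e2 : ∑ i ∈ Iᶜ, x i * (∑ j, H i j * x j) = (-α) * (((d:ℝ) - 1) * β * (-α)) := by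
      have t1 : ∑ i ∈ Iᶜ, x i * (∑ j, H i j * x j)
          = (∑ i ∈ Iᶜ, ∑ j ∈ Iᶜ, H i j) * (α * α) := by
        rw [Finset.sum_mul]
        refine Finset.sum_congr rfl fun i hi => ?_
        rw [hxC i hi, hSrow2 i hi]; ring
      rw [t1, hB]; ring
    rw [e1, e2]
  have h3 : dotProduct x ((P • H) *ᵥ x) = P * dotProduct x (H *ᵥ x) := by
    rw [smul_mulVec, dotProduct_smul, smul_eq_mul]
  rw [h1, h2, zero_mul, h3, hdot2] at hS
  have hd2 : (2:ℝ) ≤ (d:ℝ) := by exact_mod_cast hd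
  have hK : 0 < P * ((((d:ℝ) - 1)) * (α * β) * (α + β)) :=
    mul_pos hP (mul_pos (mul_pos (by linarith) (mul_pos hα hβ)) (by linarith))
  nlinarith [hK]

theorem stmt14 (n d : ℕ) (hd : 2 ≤ d) (p : MP n) (hp0 : p ≠ 0)
    (hhom : p.IsHomogeneous d) (hnn : ∀ m, 0 ≤ coeff m p)
    (hlc : LogConcaveAtOne p) :
    ¬ Decomposable p := by
  have := stmt14' n d hd p hp0 hhom hnn (by
    exact hlc)
  simpa only [Decomposable] using this

end
end

section
/- Let A ∈ ℝ^{n×n} be a symmetric matrix with at most one positive eigenvalue, and let P ∈ ℝ^{m×n} be an arbitrary matrix. Then the symmetric matrix P·A·Pᵀ has at most one positive eigenvalue. -/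
open Matrix Finset
open scoped Classical

theorem quad_eq (k : ℕ) (M : Matrix (Fin k) (Fin k) ℝ) (hM : M.IsHermitian) (x : Fin k → ℝ) :
    x ⬝ᵥ (M *ᵥ x) = ∑ i, hM.eigenvalues i *
      ((star (hM.eigenvectorUnitary : Matrix (Fin k) (Fin k) ℝ) *ᵥ x) i)^2 := by
  set U := (hM.eigenvectorUnitary : Matrix (Fin k) (Fin k) ℝ) with hU
  have hstar : star U = Uᵀ := by
    ext i j; simp [Matrix.star_apply]
  nth_rewrite 1 [hM.spectral_theorem]
  rw [Unitary.conjStarAlgAut_apply]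
  rw [← hU, ← mulVec_mulVec, ← mulVec_mulVec, dotProduct_mulVec, ← mulVec_transpose, ← hstar]
  simp only [dotProduct, mulVec_diagonal, Function.comp_apply, RCLike.ofReal_real_eq_id, id_eq]
  exact Finset.sum_congr rfl fun i _ => by ring

theorem stmt15 (n m : ℕ) (A : Matrix (Fin n) (Fin n) ℝ) (hA : A.IsHermitian)
    (h1 : (Finset.univ.filter fun i => 0 < hA.eigenvalues i).card ≤ 1)
    (P : Matrix (Fin m) (Fin n) ℝ) :
    ∃ hB : (P * A * Pᵀ).IsHermitian,
      (Finset.univ.filter fun i => 0 < hB.eigenvalues i).card ≤ 1 := by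
  have hPt : Pᵀ = Pᴴ := by ext i j; simp [conjTranspose_apply]
  have hB : (P * A * Pᵀ).IsHermitian := by
    rw [hPt]; exact isHermitian_mul_mul_conjTranspose P hA
  refine ⟨hB, ?_⟩
  by_contra hcon
  push_neg at hcon
  obtain ⟨i, hi, j, hj, hij⟩ := Finset.one_lt_card.mp hcon
  simp only [mem_filter, mem_univ, true_and] at hi hj
  set B := P * A * Pᵀ with hBdef
  set vi : Fin m → ℝ := ⇑(hB.eigenvectorBasis i) with hvi
  set vj : Fin m → ℝ := ⇑(hB.eigenvectorBasis j) with hvj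
  set UA := (hA.eigenvectorUnitary : Matrix (Fin n) (Fin n) ℝ) with hUA
  -- coefficients in A's eigenbasis of the images of vi, vj
  set ci : Fin n → ℝ := star UA *ᵥ (Pᵀ *ᵥ vi) with hci
  set cj : Fin n → ℝ := star UA *ᵥ (Pᵀ *ᵥ vj) with hcj
  -- the set of positive eigenvalues of A
  set S := Finset.univ.filter fun k => 0 < hA.eigenvalues k with hS
  -- choose (a,b) ≠ 0 with a * ci k + b * cj k = 0 for all k ∈ S
  obtain ⟨a, b, hab, hker⟩ :
      ∃ a b : ℝ, ¬(a = 0 ∧ b = 0) ∧ ∀ k ∈ S, a * ci k + b * cj k = 0 := by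
    rcases S.eq_empty_or_nonempty with hSe | ⟨s, hsmem⟩
    · exact ⟨1, 0, by simp, fun k hk => by simp [hSe] at hk⟩
    · have hall : ∀ k ∈ S, k = s := fun k hk => Finset.card_le_one.mp h1 k hk s hsmem
      by_cases hzero : ci s = 0 ∧ cj s = 0
      · exact ⟨1, 0, by simp, fun k hk => by
          rw [hall k hk]; simp [hzero.1, hzero.2]⟩
      · refine ⟨cj s, -ci s, ?_, fun k hk => ?_⟩
        · intro ⟨h1', h2'⟩; exact hzero ⟨by linarith [neg_eq_zero.mp h2'], h1'⟩
        · rw [hall k hk]; ring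
  -- the test vector
  set x : Fin m → ℝ := a • vi + b • vj with hx
  -- orthonormality facts
  have horth := hB.eigenvectorBasis.orthonormal
  have hdot : ∀ p q : Fin m, (⇑(hB.eigenvectorBasis p)) ⬝ᵥ (⇑(hB.eigenvectorBasis q))
      = if p = q then 1 else 0 := by
    intro p q
    have := orthonormal_iff_ite.mp horth p q
    rw [← this]
    simp [EuclideanSpace.inner_eq_star_dotProduct, dotProduct, mul_comm]
  -- eigenvector equations
  have hBi : B *ᵥ vi = hB.eigenvalues i • vi := hB.mulVec_eigenvectorBasis i
  have hBj : B *ᵥ vj = hB.eigenvalues j • vj := hB.mulVec_eigenvectorBasis j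
  -- compute x ⬝ᵥ B x two ways
  have hqpos : x ⬝ᵥ (B *ᵥ x) = a^2 * hB.eigenvalues i + b^2 * hB.eigenvalues j := by
    have h1' := hdot i i
    have h2' := hdot i j
    have h3' := hdot j i
    have h4' := hdot j j
    rw [if_pos rfl] at h1' h4'
    rw [if_neg hij] at h2'
    rw [if_neg (Ne.symm hij)] at h3'
    rw [hx]
    simp only [mulVec_add, mulVec_smul, hBi, hBj, dotProduct_add, add_dotProduct,
      smul_dotProduct, dotProduct_smul, smul_eq_mul, ← hvi, ← hvj] at *
    rw [h1', h2', h3', h4']; ring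
  have hqBx : 0 < x ⬝ᵥ (B *ᵥ x) := by
    rw [hqpos]
    rcases not_and_or.mp hab with ha | hb
    · have : 0 < a^2 * hB.eigenvalues i := by positivity
      nlinarith [sq_nonneg b, hj.le, sq_nonneg a]
    · have : 0 < b^2 * hB.eigenvalues j := by positivity
      nlinarith [sq_nonneg a, hi.le, sq_nonneg b]
  -- the same quantity via A
  have hquadA : x ⬝ᵥ (B *ᵥ x) = (Pᵀ *ᵥ x) ⬝ᵥ (A *ᵥ (Pᵀ *ᵥ x)) := by
    rw [hBdef, ← mulVec_mulVec, ← mulVec_mulVec, dotProduct_mulVec, ← mulVec_transpose]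
  have hlin : star UA *ᵥ (Pᵀ *ᵥ x) = fun k => a * ci k + b * cj k := by
    funext k
    rw [hx]
    simp [mulVec_add, mulVec_smul, hci, hcj]
  have hqneg : x ⬝ᵥ (B *ᵥ x) ≤ 0 := by
    rw [hquadA, quad_eq n A hA, ← hUA]
    apply Finset.sum_nonpos
    intro k _
    by_cases hk : k ∈ S
    · have := hker k hk
      rw [hlin]
      simp [this]
    · have hkle : hA.eigenvalues k ≤ 0 := by
        by_contra hpos
        exact hk (Finset.mem_filter.mpr ⟨Finset.mem_univ k, lt_of_not_ge hpos⟩)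
      exact mul_nonpos_of_nonpos_of_nonneg hkle (sq_nonneg _)
  linarith
end

section
/- Let A ∈ ℝ^{n×n} be a symmetric matrix with at most one positive eigenvalue, and let B ∈ ℝ^{n×n} be a (symmetric) positive semidefinite matrix. Then every complex eigenvalue of the product B·A is real, and the characteristic polynomial of B·A has at most one root, counted with multiplicity, that is strictly positive. -/
open Matrix Finset
open scoped Classical

section StmtAux
open Polynomial



section Aux
variable {n : ℕ}

lemma aux_charpoly_mul_comm (M N : Matrix (Fin n) (Fin n) ℝ) :
    (M * N).charpoly = (N * M).charpoly := by
  have hrev : (M * N).charpolyRev = (N * M).charpolyRev := by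
    unfold Matrix.charpolyRev
    have h1 : (1 : Matrix (Fin n) (Fin n) ℝ[X]) - (X : ℝ[X]) • (M * N).map C
        = 1 - ((X : ℝ[X]) • M.map C) * (N.map C) := by
      rw [Matrix.map_mul, Matrix.smul_mul]
    have h2 : (1 : Matrix (Fin n) (Fin n) ℝ[X]) - (X : ℝ[X]) • (N * M).map C
        = 1 - (N.map C) * ((X : ℝ[X]) • M.map C) := by
      rw [Matrix.map_mul, Matrix.mul_smul]
    rw [h1, h2, Matrix.det_one_sub_mul_comm]
  have hrev' : (M * N).charpoly.reverse = (N * M).charpoly.reverse := by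
    rw [Matrix.reverse_charpoly, Matrix.reverse_charpoly, hrev]
  have hd1 : (M * N).charpoly.natDegree = n := by
    simpa using (M * N).charpoly_natDegree_eq_dim
  have hd2 : (N * M).charpoly.natDegree = n := by
    simpa using (N * M).charpoly_natDegree_eq_dim
  ext k
  rcases le_or_gt k n with hk | hk
  · have e1 : (M * N).charpoly.coeff k = (M * N).charpoly.reverse.coeff (n - k) := by
      rw [Polynomial.coeff_reverse, hd1, Polynomial.revAt_le (by omega)]
      congr 1; omega
    have e2 : (N * M).charpoly.coeff k = (N * M).charpoly.reverse.coeff (n - k) := by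
      rw [Polynomial.coeff_reverse, hd2, Polynomial.revAt_le (by omega)]
      congr 1; omega
    rw [e1, e2, hrev']
  · rw [Polynomial.coeff_eq_zero_of_natDegree_lt (by omega),
      Polynomial.coeff_eq_zero_of_natDegree_lt (by omega)]

end Aux

section Aux2
variable {n : ℕ}

lemma aux_charpoly_diagonal (d : Fin n → ℝ) :
    (Matrix.diagonal d).charpoly = ∏ i, (X - C (d i)) := by
  unfold Matrix.charpoly Matrix.charmatrix
  rw [Matrix.scalar_apply, RingHom.mapMatrix_apply, Matrix.diagonal_map (map_zero C), Matrix.diagonal_sub,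
    Matrix.det_diagonal]

lemma aux_charpoly_eq_prod' (M : Matrix (Fin n) (Fin n) ℝ) (hM : M.IsHermitian) :
    M.charpoly = ∏ i, (X - C (hM.eigenvalues i)) := by
  have hst := hM.spectral_theorem
  set U : Matrix (Fin n) (Fin n) ℝ := (hM.eigenvectorUnitary : Matrix (Fin n) (Fin n) ℝ) with hU
  have hUU : star U * U = 1 := Unitary.coe_star_mul_self hM.eigenvectorUnitary
  have : M.charpoly = (Matrix.diagonal (RCLike.ofReal ∘ hM.eigenvalues) : Matrix (Fin n) (Fin n) ℝ).charpoly := by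
    calc M.charpoly = (U * (Matrix.diagonal (RCLike.ofReal ∘ hM.eigenvalues) * star U)).charpoly := by
          rw [← Matrix.mul_assoc]
          conv_lhs => rw [hst, Unitary.conjStarAlgAut_apply]
      _ = ((Matrix.diagonal (RCLike.ofReal ∘ hM.eigenvalues) * star U) * U).charpoly :=
          aux_charpoly_mul_comm _ _
      _ = _ := by rw [Matrix.mul_assoc, hUU, Matrix.mul_one]
  rw [this]
  have : (RCLike.ofReal ∘ hM.eigenvalues : Fin n → ℝ) = hM.eigenvalues := by
    funext i; simp
  rw [this, aux_charpoly_diagonal]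

end Aux2

section Aux3
variable {n : ℕ}

open scoped InnerProductSpace in
lemma aux_eig (M : Matrix (Fin n) (Fin n) ℝ) (hM : M.IsHermitian) (i : Fin n) :
    Matrix.toEuclideanLin M (hM.eigenvectorBasis i) =
      hM.eigenvalues i • hM.eigenvectorBasis i := by
  rw [Matrix.toEuclideanLin_apply, hM.mulVec_eigenvectorBasis i]
  rfl

open scoped InnerProductSpace in
lemma aux_quad (M : Matrix (Fin n) (Fin n) ℝ) (hM : M.IsHermitian)
    (x : EuclideanSpace ℝ (Fin n)) :
    ⟪x, Matrix.toEuclideanLin M x⟫_ℝ =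
      ∑ i, hM.eigenvalues i * ⟪hM.eigenvectorBasis i, x⟫_ℝ ^ 2 := by
  have hsym : (Matrix.toEuclideanLin M).IsSymmetric :=
    (Matrix.isHermitian_iff_isSymmetric).1 hM
  rw [← OrthonormalBasis.sum_inner_mul_inner hM.eigenvectorBasis x
    (Matrix.toEuclideanLin M x)]
  refine Finset.sum_congr rfl fun i _ => ?_
  have h1 : ⟪hM.eigenvectorBasis i, Matrix.toEuclideanLin M x⟫_ℝ =
      hM.eigenvalues i * ⟪hM.eigenvectorBasis i, x⟫_ℝ := by
    rw [← hsym (hM.eigenvectorBasis i) x, aux_eig M hM i, real_inner_smul_left]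
  rw [h1, real_inner_comm x (hM.eigenvectorBasis i)]
  ring

end Aux3

section Aux4
variable {n : ℕ}

set_option maxHeartbeats 1000000 in
open scoped InnerProductSpace in
lemma aux_key (A Cm : Matrix (Fin n) (Fin n) ℝ) (hA : A.IsHermitian) (hC : Cm.IsHermitian)
    (hM : (Cm * A * Cm).IsHermitian)
    (h1 : (Finset.univ.filter fun i => 0 < hA.eigenvalues i).card ≤ 1) :
    (Finset.univ.filter fun i => 0 < hM.eigenvalues i).card ≤ 1 := by
  by_contra hcon
  push_neg at hcon
  obtain ⟨i, hi, j, hj, hij⟩ := Finset.one_lt_card.mp hcon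
  rw [Finset.mem_filter] at hi hj
  replace hi := hi.2
  replace hj := hj.2
  set E := EuclideanSpace ℝ (Fin n)
  set TA := Matrix.toEuclideanLin A with hTA
  set TC := Matrix.toEuclideanLin Cm with hTC
  set TM := Matrix.toEuclideanLin (Cm * A * Cm) with hTM
  have hCsym : TC.IsSymmetric := (Matrix.isHermitian_iff_isSymmetric).1 hC
  have hcomp : ∀ x : E, TM x = TC (TA (TC x)) := by
    intro x
    simp only [hTA, hTC, hTM, Matrix.toEuclideanLin_apply, Equiv.apply_symm_apply,
      Matrix.mulVec_mulVec, Matrix.mul_assoc]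
  have hquad : ∀ x : E, ⟪TC x, TA (TC x)⟫_ℝ = ⟪x, TM x⟫_ℝ := by
    intro x
    rw [hcomp x, ← hCsym x (TA (TC x))]
  -- the subspace spanned by positive eigenvectors of A
  set P : Submodule ℝ E := Submodule.span ℝ
    ↑((Finset.univ.filter fun i => 0 < hA.eigenvalues i).image hA.eigenvectorBasis) with hP
  have hPfr : Module.finrank ℝ P ≤ 1 :=
    le_trans (finrank_span_finset_le_card _) (le_trans (Finset.card_image_le) h1)
  set W : Submodule ℝ E := Pᗮ with hW
  have hWfr : Module.finrank ℝ P + Module.finrank ℝ W = n := by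
    rw [hW, P.finrank_add_finrank_orthogonal]
    simp [E, finrank_euclideanSpace]
  have hWneg : ∀ y ∈ W, ⟪y, TA y⟫_ℝ ≤ 0 := by
    intro y hy
    rw [hTA, aux_quad A hA y]
    apply Finset.sum_nonpos
    intro k _
    by_cases hk : 0 < hA.eigenvalues k
    · have hmem : hA.eigenvectorBasis k ∈ P := by
        apply Submodule.subset_span
        simp only [Finset.coe_image, Set.mem_image, Finset.mem_coe, Finset.mem_filter]
        exact ⟨k, ⟨Finset.mem_univ k, hk⟩, rfl⟩
      have : ⟪hA.eigenvectorBasis k, y⟫_ℝ = 0 :=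
        (Submodule.mem_orthogonal P y).1 hy _ hmem
      simp [this]
    · push_neg at hk
      have := sq_nonneg (⟪hA.eigenvectorBasis k, y⟫_ℝ)
      nlinarith
  -- the 2-dim subspace of positive eigenvectors of M
  have hginj : Function.Injective (![i, j] : Fin 2 → Fin n) := by
    intro a b hab
    fin_cases a <;> fin_cases b <;> first | rfl | (exfalso; simp_all)
  set f : Fin 2 → E := hM.eigenvectorBasis ∘ (![i, j] : Fin 2 → Fin n) with hf
  have hfli : LinearIndependent ℝ f :=
    (hM.eigenvectorBasis.orthonormal.linearIndependent).comp _ hginj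
  set U : Submodule ℝ E := Submodule.span ℝ (Set.range f) with hUdef
  have hUfr : Module.finrank ℝ U = 2 := by
    rw [hUdef, finrank_span_eq_card hfli]
    simp
  have hww : ∀ a b : Fin n, ⟪hM.eigenvectorBasis a, hM.eigenvectorBasis b⟫_ℝ
      = if a = b then 1 else 0 := orthonormal_iff_ite.mp hM.eigenvectorBasis.orthonormal
  have hUpos : ∀ x ∈ U, x ≠ 0 → 0 < ⟪x, TM x⟫_ℝ := by
    intro x hx hx0
    obtain ⟨c, hc⟩ := (Submodule.mem_span_range_iff_exists_fun ℝ).1 hx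
    have hxc : x = c 0 • hM.eigenvectorBasis i + c 1 • hM.eigenvectorBasis j := by
      rw [← hc, Fin.sum_univ_two]
      simp [hf]
    have hTMx : TM x = (c 0 * hM.eigenvalues i) • hM.eigenvectorBasis i
        + (c 1 * hM.eigenvalues j) • hM.eigenvectorBasis j := by
      rw [hxc, map_add, LinearMap.map_smul, LinearMap.map_smul, hTM, aux_eig _ hM i,
        aux_eig _ hM j, smul_smul, smul_smul]
    have key : ⟪x, TM x⟫_ℝ = c 0 ^ 2 * hM.eigenvalues i + c 1 ^ 2 * hM.eigenvalues j := by
      rw [hTMx, hxc]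
      simp only [inner_add_left, inner_add_right, real_inner_smul_left,
        real_inner_smul_right, hww, eq_self_iff_true, if_true]
      rw [if_neg hij, if_neg (Ne.symm hij)]
      ring
    rw [key]
    have hc01 : c 0 ≠ 0 ∨ c 1 ≠ 0 := by
      by_contra h
      push_neg at h
      apply hx0
      rw [hxc, h.1, h.2]
      simp
    rcases hc01 with h | h
    · have h0 : 0 < c 0 ^ 2 * hM.eigenvalues i := by positivity
      nlinarith [mul_nonneg (sq_nonneg (c 1)) hj.le]
    · have h0 : 0 < c 1 ^ 2 * hM.eigenvalues j := by positivity
      nlinarith [mul_nonneg (sq_nonneg (c 0)) hi.le]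
  -- image under TC
  set V : Submodule ℝ E := U.map TC with hVdef
  set L : U →ₗ[ℝ] E := TC ∘ₗ U.subtype with hL
  have hrange : LinearMap.range L = V := by
    rw [hL, LinearMap.range_comp, Submodule.range_subtype]
  have hker : LinearMap.ker L = ⊥ := by
    rw [LinearMap.ker_eq_bot']
    intro u hu
    by_contra h0
    have hpos := hUpos u u.2 (fun h => h0 (Subtype.ext h))
    have hzero : ⟪(u : E), TM u⟫_ℝ = 0 := by
      rw [← hquad]
      have hTCu : TC (u : E) = 0 := hu
      rw [hTCu]
      simp
    linarith
  have hVfr : Module.finrank ℝ V = 2 := by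
    have hrn := LinearMap.finrank_range_add_finrank_ker L
    rw [hrange, hker, finrank_bot, add_zero] at hrn
    exact hrn.trans hUfr
  have hVpos : ∀ y ∈ V, y ≠ 0 → 0 < ⟪y, TA y⟫_ℝ := by
    intro y hy hy0
    obtain ⟨x, hxU, rfl⟩ := Submodule.mem_map.1 hy
    have hx0 : x ≠ 0 := by
      rintro rfl
      simp at hy0
    have hthis := hUpos x hxU hx0
    rw [← hquad x] at hthis
    exact hthis
  -- dimension count
  have hEn : Module.finrank ℝ E = n := by simp [E, finrank_euclideanSpace]
  have hsum := Submodule.finrank_sup_add_finrank_inf_eq V W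
  have hle : Module.finrank ℝ ↥(V ⊔ W) ≤ n := (Submodule.finrank_le _).trans_eq hEn
  have hpos : 0 < Module.finrank ℝ ↥(V ⊓ W) := by omega
  have hne : V ⊓ W ≠ ⊥ := by
    intro h
    rw [h, finrank_bot] at hpos
    exact lt_irrefl 0 hpos
  obtain ⟨y, hyVW, hy0⟩ := Submodule.exists_mem_ne_zero_of_ne_bot hne
  have hgt := hVpos y (Submodule.mem_inf.1 hyVW).1 hy0
  have hlt := hWneg y (Submodule.mem_inf.1 hyVW).2
  linarith

end Aux4

end StmtAux

theorem stmt16 (n : ℕ) (A B : Matrix (Fin n) (Fin n) ℝ) (hA : A.IsHermitian)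
    (h1 : (Finset.univ.filter fun i => 0 < hA.eigenvalues i).card ≤ 1)
    (hB : B.PosSemidef) :
    (∀ z : ℂ, ((B * A).charpoly.map (algebraMap ℝ ℂ)).IsRoot z → z.im = 0) ∧
      (Multiset.card ((B * A).charpoly.roots.filter (fun x => 0 < x)) ≤ 1) := by
  obtain ⟨Cm, hCps', hCC'⟩ : ∃ C : Matrix (Fin n) (Fin n) ℝ, C.PosSemidef ∧ C * C = B := by
    open scoped MatrixOrder in
    exact ⟨CFC.sqrt B, (CFC.sqrt_nonneg B).posSemidef, CFC.sqrt_mul_sqrt_self B hB.nonneg⟩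
  have hCps : Cm.PosSemidef := hCps'
  have hCH : Cm.IsHermitian := hCps.1
  have hCC : Cm * Cm = B := hCC'
  have hM : (Cm * A * Cm).IsHermitian := by
    have := Matrix.isHermitian_conjTranspose_mul_mul Cm hA
    rwa [hCH.eq] at this
  have hchar : (B * A).charpoly = (Cm * A * Cm).charpoly := by
    calc (B * A).charpoly = (Cm * (Cm * A)).charpoly := by
          rw [← hCC, Matrix.mul_assoc]
      _ = ((Cm * A) * Cm).charpoly := aux_charpoly_mul_comm _ _
      _ = (Cm * A * Cm).charpoly := rfl
  have hprod : (B * A).charpoly = ∏ i, (Polynomial.X - Polynomial.C (hM.eigenvalues i)) := by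
    rw [hchar]
    exact aux_charpoly_eq_prod' _ hM
  constructor
  · intro z hz
    rw [hprod, Polynomial.map_prod] at hz
    have : ∏ i, (z - (hM.eigenvalues i : ℂ)) = 0 := by
      simpa [Polynomial.IsRoot, Polynomial.eval_prod] using hz
    obtain ⟨k, -, hk⟩ := Finset.prod_eq_zero_iff.1 this
    have : z = (hM.eigenvalues k : ℂ) := by linear_combination hk
    rw [this]
    simp
  · have hroots : (B * A).charpoly.roots = Multiset.map hM.eigenvalues Finset.univ.val := by
      rw [hprod]
      have : (∏ i, (Polynomial.X - Polynomial.C (hM.eigenvalues i)))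
          = (Multiset.map (fun a => Polynomial.X - Polynomial.C a) (Multiset.map hM.eigenvalues Finset.univ.val)).prod := by
        rw [Multiset.map_map]
        rfl
      rw [this, Polynomial.roots_multiset_prod_X_sub_C]
    rw [hroots, Multiset.filter_map, Multiset.card_map]
    have : Multiset.card (Multiset.filter ((fun x => 0 < x) ∘ hM.eigenvalues) Finset.univ.val)
        = (Finset.univ.filter fun i => 0 < hM.eigenvalues i).card := rfl
    rw [this]
    exact aux_key A Cm hA hCH hM h1
end

section
/- Let A ∈ ℝ^{n×n} be a symmetric matrix with nonnegative entries and at most one positive eigenvalue, set w(i) = Σ_{j=1}^n A_{ij}, and assume w(i) > 0 for every i. Then A ≼ (w·wᵀ)/(Σ_{i=1}^n w(i)), i.e. the symmetric matrix (w·wᵀ)/(Σ_i w(i)) − A is positive semidefinite. -/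
open Matrix Finset
open scoped Classical

lemma core17 {ι : Type*} [Fintype ι] (μ d c : ι → ℝ) (k₀ : ι)
    (hneg : ∀ k, k ≠ k₀ → μ k ≤ 0)
    (hs : 0 < ∑ k, μ k * (d k * d k)) :
    (∑ k, μ k * (c k * c k)) * (∑ k, μ k * (d k * d k)) ≤ (∑ k, μ k * (d k * c k)) ^ 2 := by
  set s := ∑ k, μ k * (d k * d k) with hsdef
  set p := ∑ k, μ k * (d k * c k) with hpdef
  set Q := ∑ k, μ k * (c k * c k) with hQdef
  have hd0 : d k₀ ≠ 0 := by
    intro h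
    have hle : s ≤ 0 := by
      apply Finset.sum_nonpos
      intro k _
      by_cases hk : k = k₀
      · subst hk; simp [h]
      · exact mul_nonpos_of_nonpos_of_nonneg (hneg k hk) (mul_self_nonneg _)
    linarith
  set a := c k₀ with hadef
  set b := -d k₀ with hbdef
  have hb : b ≠ 0 := neg_ne_zero.mpr hd0
  have hV : ∑ k, μ k * ((a * d k + b * c k) * (a * d k + b * c k)) ≤ 0 := by
    apply Finset.sum_nonpos
    intro k _
    by_cases hk : k = k₀
    · subst hk
      have h0 : a * d k + b * c k = 0 := by rw [hadef, hbdef]; ring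
      rw [h0]; simp
    · exact mul_nonpos_of_nonpos_of_nonneg (hneg k hk) (mul_self_nonneg _)
  have hexp : ∑ k, μ k * ((a * d k + b * c k) * (a * d k + b * c k))
      = a ^ 2 * s + 2 * a * b * p + b ^ 2 * Q := by
    rw [hsdef, hpdef, hQdef, Finset.mul_sum, Finset.mul_sum, Finset.mul_sum,
      ← Finset.sum_add_distrib, ← Finset.sum_add_distrib]
    exact Finset.sum_congr rfl fun k _ => by ring
  rw [hexp] at hV
  have hb2 : 0 < b ^ 2 := by positivity
  nlinarith [sq_nonneg (a * s + b * p), mul_nonneg hs.le hs.le]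

theorem stmt17 (n : ℕ) (A : Matrix (Fin n) (Fin n) ℝ) (hA : A.IsHermitian)
    (hnn : ∀ i j, 0 ≤ A i j)
    (h1 : (Finset.univ.filter fun i => 0 < hA.eigenvalues i).card ≤ 1)
    (w : Fin n → ℝ) (hw : ∀ i, w i = ∑ j, A i j) (hwpos : ∀ i, 0 < w i) :
    ((∑ i, w i)⁻¹ • vecMulVec w w - A).PosSemidef := by
  have hherm : ((∑ i, w i)⁻¹ • vecMulVec w w - A).IsHermitian := by
    have h2 : ((∑ i, w i)⁻¹ • vecMulVec w w : Matrix (Fin n) (Fin n) ℝ).IsHermitian := by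
      show _ = _
      ext i j
      simp [conjTranspose_apply, vecMulVec_apply, mul_comm]
    exact h2.sub hA
  rcases isEmpty_or_nonempty (Fin n) with he | hne
  · refine posSemidef_iff_dotProduct_mulVec.mpr ⟨hherm, fun x => ?_⟩
    simp [dotProduct]
  refine posSemidef_iff_dotProduct_mulVec.mpr ⟨hherm, fun x => ?_⟩
  -- setup
  set μ := hA.eigenvalues with hμdef
  set u := (hA.eigenvectorUnitary : Matrix (Fin n) (Fin n) ℝ) with hudef
  have hspec : A = u * diagonal μ * star u := by
    have := hA.spectral_theorem
    simpa using this
  have hstar : ∀ y : Fin n → ℝ, star u *ᵥ y = vecMul y u := by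
    intro y
    ext k
    simp [mulVec, vecMul, dotProduct, Matrix.star_apply, mul_comm]
  have hform : ∀ y z : Fin n → ℝ,
      y ⬝ᵥ A *ᵥ z = ∑ k, μ k * (vecMul y u k * vecMul z u k) := by
    intro y z
    conv_lhs => rw [hspec]
    rw [← mulVec_mulVec, ← mulVec_mulVec, dotProduct_mulVec, hstar]
    simp [dotProduct, mulVec_diagonal]
    exact Finset.sum_congr rfl fun k _ => by ring
  set s := ∑ i, w i with hsdef
  have hs : 0 < s := Finset.sum_pos (fun i _ => hwpos i) Finset.univ_nonempty
  set d := vecMul (1 : Fin n → ℝ) u with hddef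
  set c := vecMul x u with hcdef
  have hs1 : (1 : Fin n → ℝ) ⬝ᵥ A *ᵥ (1 : Fin n → ℝ) = s := by
    simp [dotProduct, mulVec, hsdef]
    exact Finset.sum_congr rfl fun i _ => (hw i).symm
  have hp1 : x ⬝ᵥ A *ᵥ (1 : Fin n → ℝ) = w ⬝ᵥ x := by
    simp [dotProduct, mulVec, hw, mul_comm]
  -- s in eigencoordinates
  have hsform : 0 < ∑ k, μ k * (d k * d k) := by
    rw [← hform 1 1, hs1]; exact hs
  -- exactly one positive eigenvalue
  have hk₀ : ∃ k₀, 0 < μ k₀ := by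
    by_contra h
    push_neg at h
    have : ∑ k, μ k * (d k * d k) ≤ 0 :=
      Finset.sum_nonpos fun k _ => mul_nonpos_of_nonpos_of_nonneg (h k) (mul_self_nonneg _)
    linarith
  obtain ⟨k₀, hk₀⟩ := hk₀
  have hneg : ∀ k, k ≠ k₀ → μ k ≤ 0 := by
    intro k hk
    by_contra h
    push_neg at h
    exact hk (Finset.card_le_one.mp h1 k (by simp [h]) k₀ (by simp [hk₀]))
  have key := core17 μ d c k₀ hneg hsform
  rw [← hform x x] at key
  have hpc : ∑ k, μ k * (d k * c k) = w ⬝ᵥ x := by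
    rw [hddef, hcdef]
    have h2 := hform x 1
    rw [hp1] at h2
    rw [h2]
    exact Finset.sum_congr rfl fun k _ => by ring
  rw [hpc] at key
  have hseq : ∑ k, μ k * (d k * d k) = s := (hform 1 1).symm.trans hs1
  rw [hseq] at key
  -- compute the quadratic form of the difference matrix
  have hcompute : x ⬝ᵥ ((s⁻¹ • vecMulVec w w - A) *ᵥ x)
      = s⁻¹ * ((w ⬝ᵥ x) * (w ⬝ᵥ x)) - x ⬝ᵥ A *ᵥ x := by
    have hvm : vecMulVec w w *ᵥ x = (w ⬝ᵥ x) • w := by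
      ext i
      simp only [mulVec, vecMulVec_apply, dotProduct, Pi.smul_apply, smul_eq_mul,
        Finset.sum_mul, Finset.mul_sum]
      exact Finset.sum_congr rfl fun j _ => by ring
    rw [sub_mulVec, dotProduct_sub, smul_mulVec, dotProduct_smul, hvm,
      dotProduct_smul, dotProduct_comm x w]
    simp only [smul_eq_mul]
  rw [star_trivial, hcompute]
  have : x ⬝ᵥ A *ᵥ x ≤ s⁻¹ * ((w ⬝ᵥ x) * (w ⬝ᵥ x)) := by
    rw [← mul_le_mul_iff_of_pos_right hs, ← pow_two]
    calc x ⬝ᵥ A *ᵥ x * s ≤ (w ⬝ᵥ x) ^ 2 := key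
    _ = s⁻¹ * (w ⬝ᵥ x) ^ 2 * s := by field_simp
  linarith
end
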